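/- arXiv:1503.01983 — 2 statements merged into one kernel-verified Lean document; each statement's English description precedes it below -/
import Mathlib

section
/- Fix an integer k ≥ 1 and α ∈ (−1/k, −1/(k+1)), and set p = p(n) = n^α (real power). Then lim_{n→∞} Var_{μ_{n,p}}[ (−1)^k · χ_n − f_{n,k} ] / Var_{μ_{n,p}}[f_{n,k}] = 0. -/
open Finset MeasureTheory Filter Real

noncomputable section

open scoped Classical

/-- The edge set `E_n`: unordered pairs of distinct elements of `[n]`. -/
abbrev Edge (n : ℕ) := {e : Sym2 (Fin n) // ¬ e.IsDiag}

/-- An edge configuration on `[n]`. -/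
abbrev Config (n : ℕ) := Edge n → Bool

/-- Bernoulli(p) weight of a state. -/
def bern (p : ℝ) (b : Bool) : ℝ := if b then p else 1 - p

/-- Weight of a configuration under the static Erdős–Rényi measure `μ_{n,p}`. -/
def staticWeight (n : ℕ) (p : ℝ) (ω : Config n) : ℝ := ∏ e : Edge n, bern p (ω e)

/-- Expectation under the static Erdős–Rényi measure `μ_{n,p}`. -/
def staticExp (n : ℕ) (p : ℝ) (f : Config n → ℝ) : ℝ :=
  ∑ ω : Config n, staticWeight n p ω * f ω

/-- Variance under the static Erdős–Rényi measure `μ_{n,p}`. -/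
def staticVar (n : ℕ) (p : ℝ) (f : Config n → ℝ) : ℝ :=
  staticExp n p (fun ω => (f ω - staticExp n p f) ^ 2)

/-- `A` is a clique of the graph `G(ω)`: every pair of distinct elements of `A`
is an edge of `G(ω)`. -/
def IsCliqueOf {n : ℕ} (A : Finset (Fin n)) (ω : Config n) : Prop :=
  ∀ e : Edge n, e.1 ∈ A.sym2 → ω e = true

/-- The clique count `f_{n,j}(ω)`: the number of `(j+1)`-element subsets of `[n]`
all of whose pairs are edges of `G(ω)`. -/
def cliqueCount (n j : ℕ) (ω : Config n) : ℕ :=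
  ((Finset.powersetCard (j + 1) (Finset.univ : Finset (Fin n))).filter
    (fun A => IsCliqueOf A ω)).card

/-- Real-valued clique count. -/
def cliqueCountR (n j : ℕ) (ω : Config n) : ℝ := (cliqueCount n j ω : ℝ)

/-- The Euler characteristic `χ_n(ω) = Σ_{j=0}^{n-1} (-1)^j f_{n,j}(ω)`. -/
def eulerChar (n : ℕ) (ω : Config n) : ℝ :=
  ∑ j ∈ Finset.range n, (-1 : ℝ) ^ j * cliqueCountR n j ω

/-- Transition probability of the stationary on/off Markov chain with invariant
law Bernoulli(p) over a time increment `s`. -/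
def transP (lam p s : ℝ) (b b' : Bool) : ℝ :=
  if b then (if b' then p + (1 - p) * Real.exp (-lam * s)
             else (1 - p) * (1 - Real.exp (-lam * s)))
  else (if b' then p * (1 - Real.exp (-lam * s))
        else (1 - p) + p * Real.exp (-lam * s))

/-- Weight of a trajectory of the stationary on/off Markov chain observed at the
times `t 0 ≤ t 1 ≤ …`. -/
def pathWeight (lam p : ℝ) {m : ℕ} (t : Fin m → ℝ) (b : Fin m → Bool) : ℝ :=
  ∏ i : Fin m,
    if (i : ℕ) = 0 then bern p (b i)
    else transP lam p (t i - t ⟨(i : ℕ) - 1, lt_of_le_of_lt (Nat.sub_le _ _) i.isLt⟩)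
      (b ⟨(i : ℕ) - 1, lt_of_le_of_lt (Nat.sub_le _ _) i.isLt⟩) (b i)

/-- Weight of an `m`-tuple of edge configurations under the `m`-time dynamic
Erdős–Rényi measure `μ_{n,p}^{(t 0, …, t (m-1))}`. -/
def dynWeight (lam p : ℝ) (n : ℕ) {m : ℕ} (t : Fin m → ℝ) (ω : Fin m → Config n) : ℝ :=
  ∏ e : Edge n, pathWeight lam p t (fun i => ω i e)

/-- Expectation under the `m`-time dynamic Erdős–Rényi measure. -/
def dynExp (lam p : ℝ) (n : ℕ) {m : ℕ} (t : Fin m → ℝ) (F : (Fin m → Config n) → ℝ) : ℝ :=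
  ∑ ω : Fin m → Config n, dynWeight lam p n t ω * F ω

/-- The normalized clique count `f̄_{n,k}` (under the measure `μ_{n,p}`). -/
def fbar (n k : ℕ) (p : ℝ) (ω : Config n) : ℝ :=
  (cliqueCountR n k ω - staticExp n p (cliqueCountR n k)) /
    Real.sqrt (staticVar n p (cliqueCountR n k))

/-- The normalized Euler characteristic `χ̄_n` (under the measure `μ_{n,p}`). -/
def chibar (n : ℕ) (p : ℝ) (ω : Config n) : ℝ :=
  (eulerChar n ω - staticExp n p (eulerChar n)) /
    Real.sqrt (staticVar n p (eulerChar n))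

/-- The clique indicator `1_A(ω)` as a real number. -/
def cliqueInd {n : ℕ} (A : Finset (Fin n)) (ω : Config n) : ℝ :=
  if IsCliqueOf A ω then 1 else 0

/-- A quadruple of subsets has an independent set if one of them shares at most
one vertex with each of the others. -/
def HasIndepSet {n : ℕ} (A : Fin 4 → Finset (Fin n)) : Prop :=
  ∃ q : Fin 4, ∀ r : Fin 4, r ≠ q → ((A q) ∩ (A r)).card ≤ 1

/-- The quantity `g(h; Ā)` built from clique indicators at three times. -/
def gQuad {n : ℕ} (A : Fin 4 → Finset (Fin n)) (ω : Fin 3 → Config n) : ℝ :=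
  (cliqueInd (A 0) (ω 2) - cliqueInd (A 0) (ω 1)) *
  (cliqueInd (A 1) (ω 2) - cliqueInd (A 1) (ω 1)) *
  (cliqueInd (A 2) (ω 1) - cliqueInd (A 2) (ω 0)) *
  (cliqueInd (A 3) (ω 1) - cliqueInd (A 3) (ω 0))

/-- `ver(Ā)`: inclusion–exclusion count of vertices. -/
def verA {n : ℕ} (A : Fin 4 → Finset (Fin n)) : ℤ :=
  (∑ q : Fin 4, ((A q).card : ℤ))
  - (∑ q : Fin 4, ∑ r : Fin 4, if q < r then (((A q) ∩ (A r)).card : ℤ) else 0)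
  + (∑ q : Fin 4, ∑ r : Fin 4, ∑ s : Fin 4,
      if q < r ∧ r < s then (((A q) ∩ (A r) ∩ (A s)).card : ℤ) else 0)
  - ((A 0 ∩ A 1 ∩ A 2 ∩ A 3).card : ℤ)

/-- `pair(Ā)`: inclusion–exclusion count of potential edges. -/
def pairA {n : ℕ} (A : Fin 4 → Finset (Fin n)) : ℤ :=
  (∑ q : Fin 4, (Nat.choose (A q).card 2 : ℤ))
  - (∑ q : Fin 4, ∑ r : Fin 4, if q < r then (Nat.choose ((A q) ∩ (A r)).card 2 : ℤ) else 0)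
  + (∑ q : Fin 4, ∑ r : Fin 4, ∑ s : Fin 4,
      if q < r ∧ r < s then (Nat.choose ((A q) ∩ (A r) ∩ (A s)).card 2 : ℤ) else 0)
  - (Nat.choose (A 0 ∩ A 1 ∩ A 2 ∩ A 3).card 2 : ℤ)

section Toolkit
variable {n : ℕ} {p : ℝ}

lemma bern_nonneg (hp0 : 0 ≤ p) (hp1 : p ≤ 1) (b : Bool) : 0 ≤ bern p b := by
  cases b <;> simp [bern] <;> linarith

lemma staticWeight_nonneg (hp0 : 0 ≤ p) (hp1 : p ≤ 1) (ω : Config n) :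
    0 ≤ staticWeight n p ω :=
  Finset.prod_nonneg fun e _ => bern_nonneg hp0 hp1 _

lemma sum_staticWeight : ∑ ω : Config n, staticWeight n p ω = 1 := by
  calc ∑ ω : Config n, staticWeight n p ω
      = ∑ ω ∈ Fintype.piFinset (fun _ : Edge n => (Finset.univ : Finset Bool)),
          ∏ e : Edge n, bern p (ω e) := by
        rw [Fintype.piFinset_univ]; rfl
    _ = ∏ e : Edge n, ∑ b : Bool, bern p b := (Finset.prod_univ_sum _ _).symm
    _ = 1 := by simp [bern]

lemma staticExp_nonneg (hp0 : 0 ≤ p) (hp1 : p ≤ 1) {f : Config n → ℝ}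
    (hf : ∀ ω, 0 ≤ f ω) : 0 ≤ staticExp n p f :=
  Finset.sum_nonneg fun ω _ => mul_nonneg (staticWeight_nonneg hp0 hp1 ω) (hf ω)

lemma staticExp_const (c : ℝ) : staticExp n p (fun _ => c) = c := by
  unfold staticExp
  rw [← Finset.sum_mul, sum_staticWeight, one_mul]

lemma staticExp_add (f g : Config n → ℝ) :
    staticExp n p (fun ω => f ω + g ω) = staticExp n p f + staticExp n p g := by
  unfold staticExp; rw [← Finset.sum_add_distrib]; congr 1; ext ω; ring

lemma staticExp_smul (c : ℝ) (f : Config n → ℝ) :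
    staticExp n p (fun ω => c * f ω) = c * staticExp n p f := by
  unfold staticExp; rw [Finset.mul_sum]; congr 1; ext ω; ring

lemma staticExp_sum {ι : Type*} (s : Finset ι) (f : ι → Config n → ℝ) :
    staticExp n p (fun ω => ∑ i ∈ s, f i ω) = ∑ i ∈ s, staticExp n p (f i) := by
  classical
  induction s using Finset.induction_on with
  | empty => simpa using staticExp_const (n := n) (p := p) 0
  | @insert a s hx ih =>
    have : (fun ω => ∑ i ∈ insert a s, f i ω)
        = fun ω => f a ω + ∑ i ∈ s, f i ω := by
      ext ω; rw [Finset.sum_insert hx]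
    rw [this, staticExp_add, ih, Finset.sum_insert hx]

lemma staticExp_mono (hp0 : 0 ≤ p) (hp1 : p ≤ 1) {f g : Config n → ℝ}
    (h : ∀ ω, f ω ≤ g ω) : staticExp n p f ≤ staticExp n p g :=
  Finset.sum_le_sum fun ω _ => mul_le_mul_of_nonneg_left (h ω) (staticWeight_nonneg hp0 hp1 ω)

def sCov (n : ℕ) (p : ℝ) (f g : Config n → ℝ) : ℝ :=
  staticExp n p (fun ω => f ω * g ω) - staticExp n p f * staticExp n p g

lemma staticVar_eq (f : Config n → ℝ) : staticVar n p f = sCov n p f f := by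
  unfold staticVar sCov
  have h : (fun ω => (f ω - staticExp n p f) ^ 2)
      = fun ω => f ω * f ω + ((-2 * staticExp n p f) * f ω + (staticExp n p f)^2) := by
    ext ω; ring
  rw [h, staticExp_add, staticExp_add, staticExp_smul, staticExp_const]
  ring

lemma staticVar_nonneg (hp0 : 0 ≤ p) (hp1 : p ≤ 1) (f : Config n → ℝ) :
    0 ≤ staticVar n p f :=
  staticExp_nonneg hp0 hp1 fun ω => sq_nonneg _

lemma sCov_self_nonneg (hp0 : 0 ≤ p) (hp1 : p ≤ 1) (f : Config n → ℝ) :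
    0 ≤ sCov n p f f := staticVar_eq f ▸ staticVar_nonneg hp0 hp1 f

lemma sCov_add_left (f g h : Config n → ℝ) :
    sCov n p (fun ω => f ω + g ω) h = sCov n p f h + sCov n p g h := by
  unfold sCov
  rw [staticExp_add, show (fun ω => (f ω + g ω) * h ω)
    = fun ω => f ω * h ω + g ω * h ω from by ext ω; ring, staticExp_add]
  ring

lemma sCov_comm (f g : Config n → ℝ) : sCov n p f g = sCov n p g f := by
  unfold sCov
  rw [show (fun ω => f ω * g ω) = fun ω => g ω * f ω from by ext ω; ring]
  ring

lemma sCov_smul_left (c : ℝ) (f g : Config n → ℝ) :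
    sCov n p (fun ω => c * f ω) g = c * sCov n p f g := by
  unfold sCov
  rw [show (fun ω => (c * f ω) * g ω) = fun ω => c * (f ω * g ω) from by ext ω; ring,
    staticExp_smul, staticExp_smul]
  ring

lemma sCov_sum_left {ι : Type*} (s : Finset ι) (f : ι → Config n → ℝ) (g : Config n → ℝ) :
    sCov n p (fun ω => ∑ i ∈ s, f i ω) g = ∑ i ∈ s, sCov n p (f i) g := by
  classical
  induction s using Finset.induction_on with
  | empty =>
      simp only [Finset.sum_empty]
      unfold sCov
      rw [show (fun ω : Config n => (0:ℝ) * g ω) = fun _ => (0:ℝ) from by ext ω; ring]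
      simp [staticExp_const (n := n) (p := p) 0, sCov]
  | @insert a s hx ih =>
      have hfun : (fun ω => ∑ i ∈ insert a s, f i ω)
          = fun ω => f a ω + ∑ i ∈ s, f i ω := by
        ext ω; rw [Finset.sum_insert hx]
      rw [hfun, sCov_add_left, ih, Finset.sum_insert hx]

lemma sCov_sum_sum (s t : Finset (Finset (Fin n))) (f : Finset (Fin n) → Config n → ℝ) :
    sCov n p (fun ω => ∑ A ∈ s, f A ω) (fun ω => ∑ B ∈ t, f B ω)
      = ∑ A ∈ s, ∑ B ∈ t, sCov n p (f A) (f B) := by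
  rw [sCov_sum_left]
  refine Finset.sum_congr rfl fun A _ => ?_
  rw [sCov_comm, sCov_sum_left]
  exact Finset.sum_congr rfl fun B _ => sCov_comm _ _

/-- Cauchy-Schwarz for the covariance. -/
lemma sCov_sq_le (hp0 : 0 ≤ p) (hp1 : p ≤ 1) (f g : Config n → ℝ) :
    (sCov n p f g) ^ 2 ≤ sCov n p f f * sCov n p g g := by
  set a := sCov n p f f with ha
  set b := sCov n p g g with hb
  set c := sCov n p f g with hc
  have hb0 : 0 ≤ b := sCov_self_nonneg hp0 hp1 g
  have ha0 : 0 ≤ a := sCov_self_nonneg hp0 hp1 f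
  have key : ∀ t : ℝ, 0 ≤ a - 2 * t * c + t ^ 2 * b := by
    intro t
    have h0 : 0 ≤ sCov n p (fun ω => f ω + (-t) * g ω) (fun ω => f ω + (-t) * g ω) :=
      sCov_self_nonneg hp0 hp1 _
    have hexp : sCov n p (fun ω => f ω + (-t) * g ω) (fun ω => f ω + (-t) * g ω)
        = a - 2 * t * c + t ^ 2 * b := by
      rw [sCov_add_left, sCov_smul_left,
        sCov_comm (p := p) f (fun ω => f ω + (-t) * g ω), sCov_add_left, sCov_smul_left,
        sCov_comm (p := p) g (fun ω => f ω + (-t) * g ω), sCov_add_left, sCov_smul_left,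
        sCov_comm (p := p) g f]
      ring
    linarith [hexp ▸ h0]
  rcases eq_or_lt_of_le hb0 with hb' | hb'
  · have hc0 : c = 0 := by
      by_contra hne
      have h1 := key ((a + 1) / (2 * c))
      have h2 : 2 * ((a + 1) / (2 * c)) * c = a + 1 := by field_simp
      rw [← hb', mul_zero] at h1
      linarith
    rw [hc0, ← hb']
    nlinarith
  · have hkey := key (c / b)
    have heq : a - 2 * (c / b) * c + (c / b) ^ 2 * b = a - c ^ 2 / b := by
      field_simp; ring
    rw [heq] at hkey
    have := (div_le_iff₀ hb').mp (by linarith : c ^ 2 / b ≤ a)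
    linarith

lemma sqrt_staticVar_add_le (hp0 : 0 ≤ p) (hp1 : p ≤ 1) (f g : Config n → ℝ) :
    Real.sqrt (staticVar n p (fun ω => f ω + g ω))
      ≤ Real.sqrt (staticVar n p f) + Real.sqrt (staticVar n p g) := by
  rw [staticVar_eq, staticVar_eq, staticVar_eq]
  have ha0 := sCov_self_nonneg hp0 hp1 f
  have hb0 := sCov_self_nonneg hp0 hp1 g
  have hcs := sCov_sq_le hp0 hp1 f g
  have hc_le : sCov n p f g ≤ Real.sqrt (sCov n p f f) * Real.sqrt (sCov n p g g) := by
    calc sCov n p f g ≤ Real.sqrt ((sCov n p f g)^2) := by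
          rw [Real.sqrt_sq_eq_abs]; exact le_abs_self _
      _ ≤ Real.sqrt (sCov n p f f * sCov n p g g) := Real.sqrt_le_sqrt hcs
      _ = _ := Real.sqrt_mul ha0 _
  have hexp : sCov n p (fun ω => f ω + g ω) (fun ω => f ω + g ω)
      = sCov n p f f + 2 * sCov n p f g + sCov n p g g := by
    rw [sCov_add_left, sCov_comm (p := p) f (fun ω => f ω + g ω), sCov_add_left,
      sCov_comm (p := p) g (fun ω => f ω + g ω), sCov_add_left, sCov_comm (p := p) g f]
    ring
  rw [hexp]
  have h1 : sCov n p f f + 2 * sCov n p f g + sCov n p g g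
      ≤ (Real.sqrt (sCov n p f f) + Real.sqrt (sCov n p g g))^2 := by
    have e1 : Real.sqrt (sCov n p f f) ^ 2 = sCov n p f f := Real.sq_sqrt ha0
    have e2 : Real.sqrt (sCov n p g g) ^ 2 = sCov n p g g := Real.sq_sqrt hb0
    nlinarith
  calc Real.sqrt (sCov n p f f + 2 * sCov n p f g + sCov n p g g)
      ≤ Real.sqrt ((Real.sqrt (sCov n p f f) + Real.sqrt (sCov n p g g))^2) :=
        Real.sqrt_le_sqrt h1
    _ = _ := Real.sqrt_sq (by positivity)

lemma sqrt_staticVar_sum_le (hp0 : 0 ≤ p) (hp1 : p ≤ 1) {ι : Type*} (s : Finset ι)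
    (f : ι → Config n → ℝ) :
    Real.sqrt (staticVar n p (fun ω => ∑ i ∈ s, f i ω))
      ≤ ∑ i ∈ s, Real.sqrt (staticVar n p (f i)) := by
  classical
  induction s using Finset.induction_on with
  | empty =>
      simp only [Finset.sum_empty]
      have : staticVar n p (fun _ : Config n => (0:ℝ)) = 0 := by
        unfold staticVar
        rw [staticExp_const]
        simp [staticExp_const]
      rw [this, Real.sqrt_zero]
  | @insert a s hx ih =>
      have hfun : (fun ω => ∑ i ∈ insert a s, f i ω)
          = fun ω => f a ω + ∑ i ∈ s, f i ω := by
        ext ω; rw [Finset.sum_insert hx]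
      rw [hfun, Finset.sum_insert hx]
      calc Real.sqrt (staticVar n p fun ω => f a ω + ∑ i ∈ s, f i ω)
          ≤ Real.sqrt (staticVar n p (f a))
            + Real.sqrt (staticVar n p fun ω => ∑ i ∈ s, f i ω) :=
            sqrt_staticVar_add_le hp0 hp1 _ _
        _ ≤ _ := by linarith

end Toolkit
section Cliques
variable {n : ℕ} {p : ℝ}

/-- The potential edges inside a vertex set `A`. -/
def edgesOf {n : ℕ} (A : Finset (Fin n)) : Finset (Edge n) :=
  Finset.univ.filter (fun e : Edge n => e.1 ∈ A.sym2)

lemma mem_edgesOf {A : Finset (Fin n)} {e : Edge n} :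
    e ∈ edgesOf A ↔ e.1 ∈ A.sym2 := by simp [edgesOf]

lemma card_edgesOf (A : Finset (Fin n)) : (edgesOf A).card = A.card.choose 2 := by
  classical
  have h1 : (edgesOf A).card = (A.sym2.filter (fun m => ¬ m.IsDiag)).card := by
    apply Finset.card_bij (fun e _ => e.1)
    · intro e he
      simp only [Finset.mem_filter]
      exact ⟨mem_edgesOf.mp he, e.2⟩
    · intro e _ e' _ h
      exact Subtype.ext h
    · intro m hm
      simp only [Finset.mem_filter] at hm
      exact ⟨⟨m, hm.2⟩, mem_edgesOf.mpr hm.1, rfl⟩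
  have h2 : A.card = (A.sym2.filter (fun m => m.IsDiag)).card := by
    apply Finset.card_bij (fun a _ => Sym2.diag a)
    · intro a ha
      simp only [Finset.mem_filter]
      exact ⟨Finset.diag_mem_sym2_iff.mpr ha, Sym2.diag_isDiag a⟩
    · intro a _ b _ h
      exact Sym2.diag_injective h
    · intro m hm
      rw [Finset.mem_filter] at hm
      obtain ⟨a, ha⟩ := (⟨_, Sym2.diag_diagElem hm.2⟩ : ∃ a, Sym2.diag a = m)
      exact ⟨a, Finset.diag_mem_sym2_iff.mp (ha ▸ hm.1), ha⟩
  have h3 := Finset.card_filter_add_card_filter_not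
    (s := A.sym2) (p := fun m => m.IsDiag)
  have h4 : A.sym2.card = Nat.choose (A.card + 1) 2 := Finset.card_sym2 A
  have h5 : Nat.choose (A.card + 1) 2 = A.card + Nat.choose A.card 2 := by
    rw [Nat.choose_succ_succ, Nat.choose_one_right]
  omega

lemma edgesOf_inter (A B : Finset (Fin n)) :
    edgesOf A ∩ edgesOf B = edgesOf (A ∩ B) := by
  ext e
  simp only [Finset.mem_inter, mem_edgesOf, Finset.mem_sym2_iff, Finset.mem_inter]
  aesop

lemma cliqueInd_eq (A : Finset (Fin n)) (ω : Config n) :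
    cliqueInd A ω = if (∀ e ∈ edgesOf A, ω e = true) then 1 else 0 := by
  unfold cliqueInd
  congr 1
  simp only [eq_iff_iff]
  constructor
  · intro h e he; exact h e (mem_edgesOf.mp he)
  · intro h e he; exact h e (mem_edgesOf.mpr he)

lemma staticExp_forallInd (hp0 : 0 ≤ p) (hp1 : p ≤ 1) (S : Finset (Edge n)) :
    staticExp n p (fun ω => if (∀ e ∈ S, ω e = true) then 1 else 0) = p ^ S.card := by
  classical
  have key : ∀ ω : Config n,
      staticWeight n p ω * (if (∀ e ∈ S, ω e = true) then (1:ℝ) else 0)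
      = ∏ e : Edge n, (bern p (ω e) * (if e ∈ S then (if ω e then 1 else 0) else 1)) := by
    intro ω
    rw [Finset.prod_mul_distrib]
    congr 1
    symm
    rw [Finset.prod_ite_mem, Finset.univ_inter, Finset.prod_boole]
    simp
  unfold staticExp
  rw [Finset.sum_congr rfl (fun ω _ => key ω)]
  have swap : ∑ ω : Config n,
      ∏ e : Edge n, (bern p (ω e) * (if e ∈ S then (if ω e then (1:ℝ) else 0) else 1))
      = ∏ e : Edge n, ∑ b : Bool, (bern p b * (if e ∈ S then (if b then (1:ℝ) else 0) else 1)) := by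
    rw [Finset.prod_univ_sum (fun _ : Edge n => (Finset.univ : Finset Bool))]
    rw [Fintype.piFinset_univ]
  rw [swap]
  have hfac : ∀ e : Edge n,
      (∑ b : Bool, bern p b * (if e ∈ S then (if b then (1:ℝ) else 0) else 1))
      = if e ∈ S then p else 1 := by
    intro e
    by_cases he : e ∈ S <;> simp [he, bern]
  rw [Finset.prod_congr rfl (fun e _ => hfac e), Finset.prod_ite_mem, Finset.univ_inter,
    Finset.prod_const]

lemma staticExp_cliqueInd (hp0 : 0 ≤ p) (hp1 : p ≤ 1) (A : Finset (Fin n)) :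
    staticExp n p (cliqueInd A) = p ^ (A.card.choose 2) := by
  rw [show cliqueInd A = fun ω => if (∀ e ∈ edgesOf A, ω e = true) then (1:ℝ) else 0 from
    funext (cliqueInd_eq A), staticExp_forallInd hp0 hp1, card_edgesOf]

lemma staticExp_cliqueInd_mul (hp0 : 0 ≤ p) (hp1 : p ≤ 1) (A B : Finset (Fin n)) :
    staticExp n p (fun ω => cliqueInd A ω * cliqueInd B ω)
      = p ^ (edgesOf A ∪ edgesOf B).card := by
  have h : ∀ ω, cliqueInd A ω * cliqueInd B ω
      = if (∀ e ∈ edgesOf A ∪ edgesOf B, ω e = true) then (1:ℝ) else 0 := by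
    intro ω
    rw [cliqueInd_eq, cliqueInd_eq]
    by_cases hU : ∀ e ∈ edgesOf A ∪ edgesOf B, ω e = true
    · have hA : ∀ e ∈ edgesOf A, ω e = true := fun e he => hU e (Finset.mem_union_left _ he)
      have hB : ∀ e ∈ edgesOf B, ω e = true := fun e he => hU e (Finset.mem_union_right _ he)
      rw [if_pos hA, if_pos hB, if_pos hU, mul_one]
    · rw [if_neg hU]
      by_cases hA : ∀ e ∈ edgesOf A, ω e = true
      · have hB : ¬ ∀ e ∈ edgesOf B, ω e = true := fun hB =>
          hU (fun e he => (Finset.mem_union.mp he).elim (hA e) (hB e))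
        rw [if_pos hA, if_neg hB, mul_zero]
      · rw [if_neg hA, zero_mul]
  rw [show (fun ω => cliqueInd A ω * cliqueInd B ω)
    = fun ω => if (∀ e ∈ edgesOf A ∪ edgesOf B, ω e = true) then (1:ℝ) else 0 from funext h]
  exact staticExp_forallInd hp0 hp1 _

lemma card_edgesOf_union (A B : Finset (Fin n)) :
    (edgesOf A ∪ edgesOf B).card
      = A.card.choose 2 + B.card.choose 2 - (A ∩ B).card.choose 2 := by
  have := Finset.card_union_add_card_inter (edgesOf A) (edgesOf B)
  rw [edgesOf_inter, card_edgesOf, card_edgesOf, card_edgesOf] at this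
  omega

lemma sCov_cliqueInd (hp0 : 0 ≤ p) (hp1 : p ≤ 1) (A B : Finset (Fin n)) :
    sCov n p (cliqueInd A) (cliqueInd B)
      = p ^ (A.card.choose 2 + B.card.choose 2 - (A ∩ B).card.choose 2)
        - p ^ (A.card.choose 2 + B.card.choose 2) := by
  unfold sCov
  rw [staticExp_cliqueInd_mul hp0 hp1, staticExp_cliqueInd hp0 hp1,
    staticExp_cliqueInd hp0 hp1, card_edgesOf_union, ← pow_add]

lemma sCov_cliqueInd_nonneg (hp0 : 0 ≤ p) (hp1 : p ≤ 1) (A B : Finset (Fin n)) :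
    0 ≤ sCov n p (cliqueInd A) (cliqueInd B) := by
  rw [sCov_cliqueInd hp0 hp1]
  have h := pow_le_pow_of_le_one hp0 hp1
    (Nat.sub_le (A.card.choose 2 + B.card.choose 2) ((A ∩ B).card.choose 2))
  linarith

lemma sCov_cliqueInd_eq_zero (hp0 : 0 ≤ p) (hp1 : p ≤ 1) {A B : Finset (Fin n)}
    (h : (A ∩ B).card ≤ 1) : sCov n p (cliqueInd A) (cliqueInd B) = 0 := by
  rw [sCov_cliqueInd hp0 hp1]
  have : (A ∩ B).card.choose 2 = 0 := Nat.choose_eq_zero_of_lt (by omega)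
  rw [this, Nat.sub_zero, sub_self]

lemma sCov_cliqueInd_le (hp0 : 0 ≤ p) (hp1 : p ≤ 1) (A B : Finset (Fin n)) :
    sCov n p (cliqueInd A) (cliqueInd B)
      ≤ p ^ (A.card.choose 2 + B.card.choose 2 - (A ∩ B).card.choose 2) := by
  rw [sCov_cliqueInd hp0 hp1]
  have : 0 ≤ p ^ (A.card.choose 2 + B.card.choose 2) := pow_nonneg hp0 _
  linarith

lemma cliqueCountR_eq_sum (j : ℕ) (ω : Config n) :
    cliqueCountR n j ω
      = ∑ A ∈ Finset.powersetCard (j+1) (Finset.univ : Finset (Fin n)), cliqueInd A ω := by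
  unfold cliqueCountR cliqueCount cliqueInd
  rw [Finset.card_filter]
  push_cast
  rfl

end Cliques
section VarBounds
variable {n : ℕ} {p : ℝ}

/-- The family of `(j+1)`-subsets. -/
def famA (n j : ℕ) : Finset (Finset (Fin n)) := Finset.powersetCard (j+1) Finset.univ

lemma card_of_mem_famA {j : ℕ} {A : Finset (Fin n)} (h : A ∈ famA n j) : A.card = j + 1 :=
  Finset.mem_powersetCard_univ.mp h

lemma card_famA (j : ℕ) : (famA n j).card = n.choose (j+1) := by
  rw [famA, Finset.card_powersetCard, Finset.card_univ, Fintype.card_fin]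

lemma staticVar_cliqueCountR_eq (j : ℕ) :
    staticVar n p (cliqueCountR n j)
      = ∑ AB ∈ famA n j ×ˢ famA n j, sCov n p (cliqueInd AB.1) (cliqueInd AB.2) := by
  have hf : cliqueCountR n j = fun ω => ∑ A ∈ famA n j, cliqueInd A ω :=
    funext (cliqueCountR_eq_sum j)
  rw [staticVar_eq, hf, sCov_sum_sum, Finset.sum_product]

lemma choose_le_two_pow' (m t : ℕ) : m.choose t ≤ 2 ^ m := by
  rcases le_or_gt t m with h | h
  · calc m.choose t ≤ ∑ i ∈ Finset.range (m+1), m.choose i :=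
        Finset.single_le_sum (fun i _ => Nat.zero_le _) (Finset.mem_range.mpr (by omega))
      _ = 2 ^ m := Nat.sum_range_choose m
  · rw [Nat.choose_eq_zero_of_lt h]; exact Nat.zero_le _

lemma card_inter_fiber_le (j t : ℕ) :
    (((famA n j ×ˢ famA n j)).filter (fun AB => (AB.1 ∩ AB.2).card = t)).card
      ≤ n ^ (j+1) * (2 ^ (j+1) * n ^ (j+1-t)) := by
  classical
  set T := (famA n j).sigma
    (fun A => Finset.powersetCard t A ×ˢ Finset.powersetCard (j+1-t) (Finset.univ : Finset (Fin n)))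
    with hT
  have hcard : (((famA n j ×ˢ famA n j)).filter (fun AB => (AB.1 ∩ AB.2).card = t)).card
      ≤ T.card := by
    apply Finset.card_le_card_of_injOn
      (fun AB => ⟨AB.1, (AB.1 ∩ AB.2, AB.2 \ AB.1)⟩)
    · intro AB hAB
      rw [Finset.mem_coe, Finset.mem_filter, Finset.mem_product] at hAB
      obtain ⟨⟨hA, hB⟩, ht⟩ := hAB
      rw [Finset.mem_coe, hT, Finset.mem_sigma, Finset.mem_product]
      refine ⟨hA, Finset.mem_powersetCard.mpr ⟨Finset.inter_subset_left, ht⟩, ?_⟩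
      rw [Finset.mem_powersetCard]
      refine ⟨Finset.subset_univ _, ?_⟩
      have h1 : AB.2 \ AB.1 = AB.2 \ (AB.2 ∩ AB.1) := (Finset.sdiff_inter_self_left _ _).symm
      dsimp only
      rw [h1, Finset.card_sdiff_of_subset Finset.inter_subset_left, Finset.inter_comm,
        card_of_mem_famA hB, ht]
    · intro AB hAB AB' hAB' heq
      simp only [Finset.mem_coe, Finset.mem_filter, Finset.mem_product] at hAB hAB'
      have h1 : AB.1 = AB'.1 := congrArg Sigma.fst heq
      have h2 : AB.1 ∩ AB.2 = AB'.1 ∩ AB'.2 ∧ AB.2 \ AB.1 = AB'.2 \ AB'.1 := by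
        have := (Sigma.mk.inj_iff.mp heq).2
        rw [h1] at this ⊢
        exact Prod.mk_inj.mp (eq_of_heq this)
      have hB : AB.2 = AB'.2 := by
        have e1 : AB.2 \ AB.1 ∪ AB.2 ∩ AB.1 = AB.2 := Finset.sdiff_union_inter _ _
        have e2 : AB'.2 \ AB'.1 ∪ AB'.2 ∩ AB'.1 = AB'.2 := Finset.sdiff_union_inter _ _
        rw [← e1, ← e2, h2.2, Finset.inter_comm AB.2, Finset.inter_comm AB'.2, h2.1]
      exact Prod.ext h1 hB
  have hTcard : T.card ≤ n.choose (j+1) * ((j+1).choose t * n.choose (j+1-t)) := by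
    rw [hT, Finset.card_sigma]
    have : ∀ A ∈ famA n j,
        (Finset.powersetCard t A ×ˢ Finset.powersetCard (j+1-t) (Finset.univ : Finset (Fin n))).card
        = (j+1).choose t * n.choose (j+1-t) := by
      intro A hA
      rw [Finset.card_product, Finset.card_powersetCard, Finset.card_powersetCard,
        card_of_mem_famA hA, Finset.card_univ, Fintype.card_fin]
    rw [Finset.sum_congr rfl this, Finset.sum_const, card_famA, smul_eq_mul]
  calc _ ≤ T.card := hcard
    _ ≤ n.choose (j+1) * ((j+1).choose t * n.choose (j+1-t)) := hTcard
    _ ≤ n ^ (j+1) * (2 ^ (j+1) * n ^ (j+1-t)) := by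
        exact Nat.mul_le_mul (Nat.choose_le_pow _ _)
          (Nat.mul_le_mul (choose_le_two_pow' _ _) (Nat.choose_le_pow _ _))

/-- Upper bound for the variance of the clique count. -/
lemma staticVar_cliqueCountR_le (hp0 : 0 ≤ p) (hp1 : p ≤ 1) (j : ℕ) :
    staticVar n p (cliqueCountR n j)
      ≤ ∑ t ∈ Finset.Icc 2 (j+1),
          ((n:ℝ) ^ (j+1) * (2 ^ (j+1) * (n:ℝ) ^ (j+1-t)))
            * p ^ (2 * ((j+1).choose 2) - t.choose 2) := by
  classical
  set s := famA n j ×ˢ famA n j with hs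
  set g := fun AB : Finset (Fin n) × Finset (Fin n) =>
    sCov n p (cliqueInd AB.1) (cliqueInd AB.2) with hg
  set P := s.filter (fun AB => 2 ≤ (AB.1 ∩ AB.2).card) with hP
  have hVar : staticVar n p (cliqueCountR n j) = ∑ AB ∈ P, g AB := by
    rw [staticVar_cliqueCountR_eq]
    rw [← Finset.sum_filter_add_sum_filter_not s (fun AB => 2 ≤ (AB.1 ∩ AB.2).card) g]
    have hzero : ∑ AB ∈ s.filter (fun AB => ¬ 2 ≤ (AB.1 ∩ AB.2).card), g AB = 0 :=
      Finset.sum_eq_zero fun AB hAB => by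
        rw [Finset.mem_filter] at hAB
        exact sCov_cliqueInd_eq_zero hp0 hp1 (by omega)
    rw [hzero, add_zero]
  rw [hVar]
  have hmaps : ∀ AB ∈ P, (AB.1 ∩ AB.2).card ∈ Finset.Icc 2 (j+1) := by
    intro AB hAB
    rw [hP, Finset.mem_filter, hs, Finset.mem_product] at hAB
    rw [Finset.mem_Icc]
    refine ⟨hAB.2, ?_⟩
    calc (AB.1 ∩ AB.2).card ≤ AB.1.card := Finset.card_le_card Finset.inter_subset_left
      _ = j + 1 := card_of_mem_famA hAB.1.1
  rw [← Finset.sum_fiberwise_of_maps_to hmaps g]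
  apply Finset.sum_le_sum
  intro t ht
  have hbound : ∀ AB ∈ P.filter (fun AB => (AB.1 ∩ AB.2).card = t),
      g AB ≤ p ^ (2 * ((j+1).choose 2) - t.choose 2) := by
    intro AB hAB
    rw [Finset.mem_filter, hP, Finset.mem_filter, hs, Finset.mem_product] at hAB
    obtain ⟨⟨⟨hA, hB⟩, _⟩, hteq⟩ := hAB
    have := sCov_cliqueInd_le hp0 hp1 AB.1 AB.2
    rw [card_of_mem_famA hA, card_of_mem_famA hB, hteq] at this
    calc g AB ≤ p ^ ((j+1).choose 2 + (j+1).choose 2 - t.choose 2) := this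
      _ = p ^ (2 * ((j+1).choose 2) - t.choose 2) := by ring_nf
  calc ∑ AB ∈ P.filter (fun AB => (AB.1 ∩ AB.2).card = t), g AB
      ≤ ∑ _AB ∈ P.filter (fun AB => (AB.1 ∩ AB.2).card = t),
          p ^ (2 * ((j+1).choose 2) - t.choose 2) := Finset.sum_le_sum hbound
    _ = ((P.filter (fun AB => (AB.1 ∩ AB.2).card = t)).card : ℝ)
          * p ^ (2 * ((j+1).choose 2) - t.choose 2) := by
        rw [Finset.sum_const, nsmul_eq_mul]
    _ ≤ ((n ^ (j+1) * (2 ^ (j+1) * n ^ (j+1-t)) : ℕ) : ℝ)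
          * p ^ (2 * ((j+1).choose 2) - t.choose 2) := by
        apply mul_le_mul_of_nonneg_right _ (pow_nonneg hp0 _)
        have hsub : P.filter (fun AB => (AB.1 ∩ AB.2).card = t)
            ⊆ s.filter (fun AB => (AB.1 ∩ AB.2).card = t) :=
          Finset.filter_subset_filter _ (Finset.filter_subset _ _)
        exact_mod_cast (Finset.card_le_card hsub).trans (card_inter_fiber_le j t)
    _ = ((n:ℝ) ^ (j+1) * (2 ^ (j+1) * (n:ℝ) ^ (j+1-t)))
          * p ^ (2 * ((j+1).choose 2) - t.choose 2) := by push_cast; ring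

/-- Diagonal lower bound for the variance. -/
lemma staticVar_cliqueCountR_ge_diag (hp0 : 0 ≤ p) (hp1 : p ≤ 1) (k : ℕ) :
    (n.choose (k+1) : ℝ) * (p ^ ((k+1).choose 2) - p ^ (2 * ((k+1).choose 2)))
      ≤ staticVar n p (cliqueCountR n k) := by
  classical
  rw [staticVar_cliqueCountR_eq, Finset.sum_product]
  have h1 : ∀ A ∈ famA n k,
      p ^ ((k+1).choose 2) - p ^ (2 * ((k+1).choose 2))
        ≤ ∑ B ∈ famA n k, sCov n p (cliqueInd A) (cliqueInd B) := by
    intro A hA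
    have hAA : sCov n p (cliqueInd A) (cliqueInd A)
        = p ^ ((k+1).choose 2) - p ^ (2 * ((k+1).choose 2)) := by
      rw [sCov_cliqueInd hp0 hp1, Finset.inter_self, card_of_mem_famA hA]
      congr 2
      · omega
      · ring
    calc p ^ ((k+1).choose 2) - p ^ (2 * ((k+1).choose 2))
        = sCov n p (cliqueInd A) (cliqueInd A) := hAA.symm
      _ ≤ ∑ B ∈ famA n k, sCov n p (cliqueInd A) (cliqueInd B) :=
          Finset.single_le_sum (fun B _ => sCov_cliqueInd_nonneg hp0 hp1 A B) hA
  calc (n.choose (k+1) : ℝ) * (p ^ ((k+1).choose 2) - p ^ (2 * ((k+1).choose 2)))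
      = ∑ _A ∈ famA n k, (p ^ ((k+1).choose 2) - p ^ (2 * ((k+1).choose 2))) := by
        rw [Finset.sum_const, nsmul_eq_mul, card_famA]
    _ ≤ _ := Finset.sum_le_sum h1

end VarBounds
section LowerTwo
variable {n : ℕ} {p : ℝ}

/-- A canonical 2-element subset of a finset with at least two elements. -/
def pick2 (A : Finset (Fin n)) : Finset (Fin n) :=
  if h : 1 < A.card then
    {A.min' (Finset.card_pos.mp (by omega)), A.max' (Finset.card_pos.mp (by omega))}
  else ∅

lemma pick2_subset {A : Finset (Fin n)} (h : 1 < A.card) : pick2 A ⊆ A := by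
  rw [pick2, dif_pos h]
  intro x hx
  rcases Finset.mem_insert.mp hx with rfl | hx
  · exact A.min'_mem _
  · rw [Finset.mem_singleton.mp hx]; exact A.max'_mem _

lemma pick2_card {A : Finset (Fin n)} (h : 1 < A.card) : (pick2 A).card = 2 := by
  rw [pick2, dif_pos h]
  have hne : A.Nonempty := Finset.card_pos.mp (by omega)
  obtain ⟨a, ha, b, hb, hab⟩ := Finset.one_lt_card.mp h
  have : A.min' hne < A.max' hne := Finset.min'_lt_max' A ha hb hab
  exact Finset.card_pair (ne_of_lt this)

/-- Off-diagonal lower bound for the variance (pairs sharing exactly two vertices). -/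
lemma staticVar_cliqueCountR_ge_two (hp0 : 0 ≤ p) (hp1 : p ≤ 1) {k : ℕ} (hk : 1 ≤ k) :
    (n.choose (k+1) : ℝ) * ((n - (k+1)).choose (k-1))
        * (p ^ (2 * ((k+1).choose 2) - 1) - p ^ (2 * ((k+1).choose 2)))
      ≤ staticVar n p (cliqueCountR n k) := by
  classical
  rw [staticVar_cliqueCountR_eq]
  set g := fun AB : Finset (Fin n) × Finset (Fin n) =>
    sCov n p (cliqueInd AB.1) (cliqueInd AB.2) with hg
  set σ := (famA n k).sigma
    (fun A => Finset.powersetCard (k-1) ((Finset.univ : Finset (Fin n)) \ A)) with hσ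
  set φ : (Σ _A : Finset (Fin n), Finset (Fin n)) → Finset (Fin n) × Finset (Fin n) :=
    fun AC => (AC.1, AC.2 ∪ pick2 AC.1) with hφ
  -- facts about members of σ
  have hmem : ∀ AC ∈ σ, AC.1 ∈ famA n k ∧ AC.2 ⊆ Finset.univ \ AC.1 ∧ AC.2.card = k - 1 := by
    intro AC hAC
    rw [hσ, Finset.mem_sigma, Finset.mem_powersetCard] at hAC
    exact ⟨hAC.1, hAC.2.1, hAC.2.2⟩
  have hdisj : ∀ AC ∈ σ, Disjoint AC.2 AC.1 := by
    intro AC hAC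
    obtain ⟨_, h2, _⟩ := hmem AC hAC
    exact Finset.disjoint_left.mpr fun x hx =>
      (Finset.mem_sdiff.mp (h2 hx)).2
  have hcardA : ∀ AC ∈ σ, 1 < AC.1.card := by
    intro AC hAC
    rw [card_of_mem_famA (hmem AC hAC).1]; omega
  have hinterim : ∀ AC ∈ σ, AC.1 ∩ (AC.2 ∪ pick2 AC.1) = pick2 AC.1 := by
    intro AC hAC
    rw [Finset.inter_union_distrib_left]
    have h1 : AC.1 ∩ AC.2 = ∅ := by
      rw [Finset.inter_comm]
      exact Finset.disjoint_iff_inter_eq_empty.mp (hdisj AC hAC)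
    have h2 : AC.1 ∩ pick2 AC.1 = pick2 AC.1 :=
      Finset.inter_eq_right.mpr (pick2_subset (hcardA AC hAC))
    rw [h1, h2, Finset.empty_union]
  have hcardB : ∀ AC ∈ σ, (AC.2 ∪ pick2 AC.1).card = k + 1 := by
    intro AC hAC
    rw [Finset.card_union_of_disjoint, (hmem AC hAC).2.2, pick2_card (hcardA AC hAC)]
    · omega
    · exact Finset.disjoint_of_subset_right (pick2_subset (hcardA AC hAC)) (hdisj AC hAC)
  -- the image is inside the product family
  have himg : ∀ AC ∈ σ, φ AC ∈ famA n k ×ˢ famA n k := by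
    intro AC hAC
    rw [Finset.mem_product]
    exact ⟨(hmem AC hAC).1, Finset.mem_powersetCard_univ.mpr (hcardB AC hAC)⟩
  have hinj : Set.InjOn φ σ := by
    rintro ⟨A, C⟩ hAC ⟨A', C'⟩ hAC' heq
    have h1 : A = A' := congrArg Prod.fst heq
    subst h1
    have h2 : C ∪ pick2 A = C' ∪ pick2 A := congrArg Prod.snd heq
    rw [Finset.mem_coe] at hAC hAC'
    have e1 : (C ∪ pick2 A) \ A = C := by
      rw [Finset.union_sdiff_distrib,
        Finset.sdiff_eq_empty_iff_subset.mpr (pick2_subset (hcardA ⟨A, C⟩ hAC)),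
        Finset.union_empty, Finset.sdiff_eq_self_iff_disjoint.mpr (hdisj ⟨A, C⟩ hAC)]
    have e2 : (C' ∪ pick2 A) \ A = C' := by
      rw [Finset.union_sdiff_distrib,
        Finset.sdiff_eq_empty_iff_subset.mpr (pick2_subset (hcardA ⟨A, C'⟩ hAC')),
        Finset.union_empty, Finset.sdiff_eq_self_iff_disjoint.mpr (hdisj ⟨A, C'⟩ hAC')]
    have hC : C = C' := by rw [← e1, ← e2, h2]
    rw [hC]
  -- the value of g on the image
  have hval : ∀ AC ∈ σ, g (φ AC)
      = p ^ (2 * ((k+1).choose 2) - 1) - p ^ (2 * ((k+1).choose 2)) := by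
    intro AC hAC
    rw [hg]
    show sCov n p (cliqueInd AC.1) (cliqueInd (AC.2 ∪ pick2 AC.1)) = _
    rw [sCov_cliqueInd hp0 hp1, hinterim AC hAC, pick2_card (hcardA AC hAC),
      card_of_mem_famA (hmem AC hAC).1, hcardB AC hAC]
    congr 2
    · have : Nat.choose 2 2 = 1 := by decide
      rw [this]; ring_nf
    · ring
  -- σ's cardinality
  have hσcard : σ.card = n.choose (k+1) * (n - (k+1)).choose (k-1) := by
    rw [hσ, Finset.card_sigma]
    have : ∀ A ∈ famA n k,
        (Finset.powersetCard (k-1) ((Finset.univ : Finset (Fin n)) \ A)).card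
          = (n - (k+1)).choose (k-1) := by
      intro A hA
      rw [Finset.card_powersetCard, Finset.card_sdiff_of_subset (Finset.subset_univ A),
        Finset.card_univ, Fintype.card_fin, card_of_mem_famA hA]
    rw [Finset.sum_congr rfl this, Finset.sum_const, card_famA, smul_eq_mul]
  -- put it together
  calc (n.choose (k+1) : ℝ) * ((n - (k+1)).choose (k-1))
        * (p ^ (2 * ((k+1).choose 2) - 1) - p ^ (2 * ((k+1).choose 2)))
      = ∑ AC ∈ σ, (p ^ (2 * ((k+1).choose 2) - 1) - p ^ (2 * ((k+1).choose 2))) := by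
        rw [Finset.sum_const, nsmul_eq_mul, hσcard]; push_cast; ring
    _ = ∑ AC ∈ σ, g (φ AC) := (Finset.sum_congr rfl fun AC hAC => (hval AC hAC).symm)
    _ = ∑ AB ∈ σ.image φ, g AB := (Finset.sum_image (fun x hx y hy h => hinj hx hy h)).symm
    _ ≤ ∑ AB ∈ famA n k ×ˢ famA n k, g AB := by
        apply Finset.sum_le_sum_of_subset_of_nonneg
        · intro AB hAB
          obtain ⟨AC, hAC, rfl⟩ := Finset.mem_image.mp hAB
          exact himg AC hAC
        · intro AB _ _
          exact sCov_cliqueInd_nonneg hp0 hp1 _ _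

end LowerTwo
section Exponents

/-- The real exponent of `n` in the `(j,t)` covariance term when `p = n^α`. -/
def Fex (α : ℝ) (j t : ℕ) : ℝ :=
  (2*((j:ℝ)+1) - t) + α * (((j:ℝ)+1)*j - (t:ℝ)*((t:ℝ)-1)/2)

lemma convex_quad_max {a b t u v : ℝ} (ha : 0 ≤ a) (h1 : u ≤ t) (h2 : t ≤ v) :
    a*t^2 + b*t ≤ max (a*u^2 + b*u) (a*v^2 + b*v) := by
  rcases eq_or_lt_of_le (h1.trans h2) with h | h
  · have ht : t = u := le_antisymm (h ▸ h2) h1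
    rw [ht]
    exact le_max_left _ _
  · have key : (v - u) * (a*t^2+b*t) ≤ (v-t)*(a*u^2+b*u) + (t-u)*(a*v^2+b*v) := by
      nlinarith [mul_nonneg (mul_nonneg ha (sub_nonneg.mpr h1))
        (mul_nonneg (sub_nonneg.mpr h2) (sub_nonneg.mpr (h1.trans h2)))]
    rcases le_total (a*u^2 + b*u) (a*v^2 + b*v) with hc | hc
    · rw [max_eq_right hc]
      nlinarith [mul_nonneg (sub_nonneg.mpr h2) (sub_nonneg.mpr hc)]
    · rw [max_eq_left hc]
      nlinarith [mul_nonneg (sub_nonneg.mpr h1) (sub_nonneg.mpr hc)]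

/-- Convexity in `t`: the exponent is maximized at an endpoint. -/
lemma Fex_le_max_endpoints {α : ℝ} (hα : α < 0) {j t : ℕ} (h2 : 2 ≤ t) (hjt : t ≤ j+1) :
    Fex α j t ≤ max (Fex α j 2) (Fex α j (j+1)) := by
  have hq : ∀ s : ℕ, Fex α j s
      = ((-α/2)*(s:ℝ)^2 + (α/2 - 1)*(s:ℝ)) + (2*((j:ℝ)+1) + α*(((j:ℝ)+1)*j)) := by
    intro s; unfold Fex; ring
  rw [hq, hq, hq]
  have h2' : (2:ℝ) ≤ (t:ℝ) := by exact_mod_cast h2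
  have hjt' : (t:ℝ) ≤ ((j+1 : ℕ):ℝ) := by exact_mod_cast hjt
  have hmax := convex_quad_max (a := -α/2) (b := α/2 - 1) (by linarith) h2' hjt'
  have hcast : ((j+1 : ℕ):ℝ) = (j:ℝ) + 1 := by push_cast; ring
  rw [hcast] at hmax
  have h2c : ((2:ℕ):ℝ) = (2:ℝ) := by norm_num
  rw [h2c]
  rcases le_total ((-α/2)*(2:ℝ)^2 + (α/2-1)*(2:ℝ)) ((-α/2)*((j:ℝ)+1)^2 + (α/2-1)*((j:ℝ)+1))
    with hc | hc
  · rw [max_eq_right hc] at hmax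
    apply le_max_of_le_right
    rw [hcast]
    linarith
  · rw [max_eq_left hc] at hmax
    apply le_max_of_le_left
    linarith

/-- The key margin estimate on exponents. -/
lemma exponent_margin {k : ℕ} (hk : 1 ≤ k) {α : ℝ}
    (hα1 : -(1/(k:ℝ)) < α) (hα2 : α < -(1/((k:ℝ)+1))) :
    ∃ δ : ℝ, 0 < δ ∧ ∀ j t : ℕ, j ≠ k → 2 ≤ t → t ≤ j + 1 →
      Fex α j t ≤ max (Fex α k 2) (Fex α k (k+1)) - δ * |(j:ℝ) - k| := by
  have hk0 : (0:ℝ) < k := by exact_mod_cast hk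
  have hk1 : (0:ℝ) < (k:ℝ)+1 := by linarith
  have hinv : 0 < 1/((k:ℝ)+1) := by positivity
  have hαneg : α < 0 := lt_trans hα2 (by linarith)
  have e1 : (k:ℝ) * (1/(k:ℝ)) = 1 := mul_one_div_cancel (ne_of_gt hk0)
  have h1 : 0 < 1 + (k:ℝ)*α := by nlinarith [mul_lt_mul_of_pos_left hα1 hk0]
  have e2 : ((k:ℝ)+1) * (1/((k:ℝ)+1)) = 1 := mul_one_div_cancel (ne_of_gt hk1)
  have h2 : 1 + ((k:ℝ)+1)*α < 0 := by nlinarith [mul_lt_mul_of_pos_left hα2 hk1]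
  refine ⟨min (1 + (k:ℝ)*α) (-(1 + ((k:ℝ)+1)*α)), lt_min h1 (by linarith), ?_⟩
  have hδ1 : min (1 + (k:ℝ)*α) (-(1 + ((k:ℝ)+1)*α)) ≤ 1 + (k:ℝ)*α := min_le_left _ _
  have hδ2 : min (1 + (k:ℝ)*α) (-(1 + ((k:ℝ)+1)*α)) ≤ -(1 + ((k:ℝ)+1)*α) := min_le_right _ _
  have hδpos : 0 < min (1 + (k:ℝ)*α) (-(1 + ((k:ℝ)+1)*α)) := lt_min h1 (by linarith)
  generalize hδg : min (1 + (k:ℝ)*α) (-(1 + ((k:ℝ)+1)*α)) = δ at hδ1 hδ2 hδpos ⊢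
  intro j t hj ht2 hjt
  have hid1 : Fex α j 2 - Fex α k 2 = ((j:ℝ) - k) * (2 + α*((j:ℝ)+k+1)) := by
    unfold Fex; push_cast; ring
  have hid2 : Fex α j (j+1) - Fex α k (k+1) = ((j:ℝ) - k) * (1 + α*((j:ℝ)+k+1)/2) := by
    unfold Fex; push_cast; ring
  have claim : Fex α j 2 ≤ Fex α k 2 - δ * |(j:ℝ) - k|
      ∧ Fex α j (j+1) ≤ Fex α k (k+1) - δ * |(j:ℝ) - k| := by
    rcases lt_or_gt_of_ne hj with hlt | hgt
    · -- j < k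
      have hxy : (j:ℝ) + 1 ≤ (k:ℝ) := by exact_mod_cast Nat.succ_le_of_lt hlt
      have habs : |(j:ℝ) - k| = (k:ℝ) - j := by
        rw [abs_of_nonpos (by linarith)]; ring
      have hp : 0 ≤ (-α) * ((k:ℝ) - ((j:ℝ)+1)) :=
        mul_nonneg (by linarith) (by linarith)
      have hfac1 : δ ≤ 2 + α*((j:ℝ)+k+1) := by linarith [hp, hδ1, hδpos]
      have hfac2 : δ ≤ 1 + α*((j:ℝ)+k+1)/2 := by linarith [hp, hδ1, hδpos]
      constructor
      · rw [habs]
        have hmul := mul_le_mul_of_nonneg_left hfac1 (show (0:ℝ) ≤ (k:ℝ) - j by linarith)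
        linarith [hid1, hmul]
      · rw [habs]
        have hmul := mul_le_mul_of_nonneg_left hfac2 (show (0:ℝ) ≤ (k:ℝ) - j by linarith)
        linarith [hid2, hmul]
    · -- j > k
      have hxy : (k:ℝ) + 1 ≤ (j:ℝ) := by exact_mod_cast Nat.succ_le_of_lt hgt
      have habs : |(j:ℝ) - k| = (j:ℝ) - k := abs_of_nonneg (by linarith)
      have hp : 0 ≤ (-α) * ((j:ℝ) - ((k:ℝ)+1)) :=
        mul_nonneg (by linarith) (by linarith)
      have hfac1 : 2 + α*((j:ℝ)+k+1) ≤ -δ := by linarith [hp, hδ2, hδpos]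
      have hfac2 : 1 + α*((j:ℝ)+k+1)/2 ≤ -δ := by linarith [hp, hδ2, hδpos]
      constructor
      · rw [habs]
        have hmul := mul_le_mul_of_nonneg_left hfac1 (show (0:ℝ) ≤ (j:ℝ) - k by linarith)
        linarith [hid1, hmul]
      · rw [habs]
        have hmul := mul_le_mul_of_nonneg_left hfac2 (show (0:ℝ) ≤ (j:ℝ) - k by linarith)
        linarith [hid2, hmul]
  have hend := Fex_le_max_endpoints hαneg ht2 hjt
  refine hend.trans (max_le ?_ ?_)
  · exact claim.1.trans (by
      have := le_max_left (Fex α k 2) (Fex α k (k+1))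
      linarith)
  · exact claim.2.trans (by
      have := le_max_right (Fex α k 2) (Fex α k (k+1))
      linarith)

end Exponents
section Bounds
open Finset

lemma term_eq {n : ℕ} (hn : 1 ≤ n) (α : ℝ) {j t : ℕ} (hjt : t ≤ j+1) :
    ((n:ℝ) ^ (j+1) * (2 ^ (j+1) * (n:ℝ) ^ (j+1-t)))
        * ((n:ℝ) ^ α) ^ (2 * ((j+1).choose 2) - t.choose 2)
      = 2 ^ (j+1) * (n:ℝ) ^ (Fex α j t) := by
  have hx : (0:ℝ) < (n:ℝ) := by exact_mod_cast hn
  have hM : t.choose 2 ≤ 2 * ((j+1).choose 2) :=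
    le_trans (Nat.choose_le_choose 2 hjt) (by omega)
  have e1 : (n:ℝ) ^ (j+1) = (n:ℝ) ^ ((j+1 : ℕ):ℝ) := (Real.rpow_natCast _ _).symm
  have e2 : (n:ℝ) ^ (j+1-t) = (n:ℝ) ^ ((j+1-t : ℕ):ℝ) := (Real.rpow_natCast _ _).symm
  have e3 : ((n:ℝ) ^ α) ^ (2 * ((j+1).choose 2) - t.choose 2)
      = (n:ℝ) ^ (α * ((2 * ((j+1).choose 2) - t.choose 2 : ℕ):ℝ)) := by
    rw [← Real.rpow_natCast ((n:ℝ)^α) _, ← Real.rpow_mul hx.le]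
  calc ((n:ℝ) ^ (j+1) * (2 ^ (j+1) * (n:ℝ) ^ (j+1-t)))
        * ((n:ℝ) ^ α) ^ (2 * ((j+1).choose 2) - t.choose 2)
      = 2 ^ (j+1) * ((n:ℝ) ^ ((j+1 : ℕ):ℝ) * (n:ℝ) ^ ((j+1-t : ℕ):ℝ)
          * (n:ℝ) ^ (α * ((2 * ((j+1).choose 2) - t.choose 2 : ℕ):ℝ))) := by
        rw [e1, e2, e3]; ring
    _ = 2 ^ (j+1) * (n:ℝ) ^ (((j+1 : ℕ):ℝ) + ((j+1-t : ℕ):ℝ)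
          + α * ((2 * ((j+1).choose 2) - t.choose 2 : ℕ):ℝ)) := by
        rw [Real.rpow_add hx, Real.rpow_add hx]
    _ = 2 ^ (j+1) * (n:ℝ) ^ (Fex α j t) := by
        congr 1
        rw [Nat.cast_sub hjt, Nat.cast_sub hM]
        push_cast [Nat.cast_choose_two]
        unfold Fex
        ring

/-- Upper bound for the variance of `f_j` in `rpow` form. -/
lemma varUB {n : ℕ} (hn : 1 ≤ n) {α : ℝ} (hα : α < 0) (j : ℕ)
    (hp0 : 0 ≤ (n:ℝ)^α) (hp1 : (n:ℝ)^α ≤ 1) :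
    staticVar n ((n:ℝ)^α) (cliqueCountR n j)
      ≤ ((j:ℝ)+1) * 2^(j+1) * (n:ℝ) ^ (max (Fex α j 2) (Fex α j (j+1))) := by
  have hx1 : (1:ℝ) ≤ (n:ℝ) := by exact_mod_cast hn
  calc staticVar n ((n:ℝ)^α) (cliqueCountR n j)
      ≤ ∑ t ∈ Finset.Icc 2 (j+1),
          ((n:ℝ) ^ (j+1) * (2 ^ (j+1) * (n:ℝ) ^ (j+1-t)))
            * ((n:ℝ)^α) ^ (2 * ((j+1).choose 2) - t.choose 2) :=
        staticVar_cliqueCountR_le hp0 hp1 j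
    _ = ∑ t ∈ Finset.Icc 2 (j+1), 2 ^ (j+1) * (n:ℝ) ^ (Fex α j t) := by
        refine Finset.sum_congr rfl fun t ht => ?_
        rw [Finset.mem_Icc] at ht
        exact term_eq hn α ht.2
    _ ≤ ∑ _t ∈ Finset.Icc 2 (j+1),
          2 ^ (j+1) * (n:ℝ) ^ (max (Fex α j 2) (Fex α j (j+1))) := by
        refine Finset.sum_le_sum fun t ht => ?_
        rw [Finset.mem_Icc] at ht
        exact mul_le_mul_of_nonneg_left
          (Real.rpow_le_rpow_of_exponent_le hx1 (Fex_le_max_endpoints hα ht.1 ht.2))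
          (by positivity)
    _ = ((Finset.Icc 2 (j+1)).card : ℝ)
          * (2 ^ (j+1) * (n:ℝ) ^ (max (Fex α j 2) (Fex α j (j+1)))) := by
        rw [Finset.sum_const, nsmul_eq_mul]
    _ ≤ ((j:ℝ)+1) * 2^(j+1) * (n:ℝ) ^ (max (Fex α j 2) (Fex α j (j+1))) := by
        have hcard : ((Finset.Icc 2 (j+1)).card : ℝ) ≤ (j:ℝ)+1 := by
          rw [Nat.card_Icc]
          push_cast
          have : ((j + 1 + 1 - 2 : ℕ) : ℝ) ≤ (j:ℝ) := by
            have : j + 1 + 1 - 2 ≤ j := by omega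
            exact_mod_cast this
          linarith
        rw [mul_assoc]
        exact mul_le_mul_of_nonneg_right (by linarith)
          (by positivity)

lemma pow_le_choose_mul {M N c m : ℕ} (h : M ≤ c*(N+1-m)) :
    M^m ≤ c^m * (N.choose m * m.factorial) := by
  calc M^m ≤ (c*(N+1-m))^m := Nat.pow_le_pow_left h m
    _ = c^m * (N+1-m)^m := mul_pow c _ m
    _ ≤ c^m * N.descFactorial m :=
        Nat.mul_le_mul_left _ (Nat.pow_sub_le_descFactorial N m)
    _ = c^m * (N.choose m * m.factorial) := by
        rw [Nat.descFactorial_eq_factorial_mul_choose]; ring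

/-- bridges for the denominator exponents -/
lemma bridge2 {n k : ℕ} (hn : 1 ≤ n) (hk : 1 ≤ k) (α : ℝ) :
    (n:ℝ) ^ (Fex α k 2) = (n:ℝ)^(2*k) * ((n:ℝ)^α)^(2*((k+1).choose 2) - 1) := by
  have hx : (0:ℝ) < (n:ℝ) := by exact_mod_cast hn
  have hE : 1 ≤ (k+1).choose 2 := Nat.choose_pos (by omega)
  have e1 : (n:ℝ)^(2*k) = (n:ℝ) ^ ((2*k : ℕ):ℝ) := (Real.rpow_natCast _ _).symm
  have e3 : ((n:ℝ) ^ α) ^ (2*((k+1).choose 2) - 1)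
      = (n:ℝ) ^ (α * ((2*((k+1).choose 2) - 1 : ℕ):ℝ)) := by
    rw [← Real.rpow_natCast ((n:ℝ)^α) _, ← Real.rpow_mul hx.le]
  rw [e1, e3, ← Real.rpow_add hx]
  congr 1
  rw [Nat.cast_sub (by omega)]
  push_cast [Nat.cast_choose_two]
  unfold Fex
  ring

lemma bridge1 {n k : ℕ} (hn : 1 ≤ n) (α : ℝ) :
    (n:ℝ) ^ (Fex α k (k+1)) = (n:ℝ)^(k+1) * ((n:ℝ)^α)^((k+1).choose 2) := by
  have hx : (0:ℝ) < (n:ℝ) := by exact_mod_cast hn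
  have e1 : (n:ℝ)^(k+1) = (n:ℝ) ^ ((k+1 : ℕ):ℝ) := (Real.rpow_natCast _ _).symm
  have e3 : ((n:ℝ) ^ α) ^ ((k+1).choose 2)
      = (n:ℝ) ^ (α * (((k+1).choose 2 : ℕ):ℝ)) := by
    rw [← Real.rpow_natCast ((n:ℝ)^α) _, ← Real.rpow_mul hx.le]
  rw [e1, e3, ← Real.rpow_add hx]
  congr 1
  unfold Fex
  rw [Nat.cast_choose_two]
  push_cast
  ring

/-- Lower bound for the variance of `f_k` in `rpow` form. -/
lemma varLB {n k : ℕ} (hk : 1 ≤ k) (hn : 4*k+4 ≤ n) {α : ℝ}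
    (hp0 : 0 ≤ (n:ℝ)^α) (hp1 : (n:ℝ)^α ≤ 1) :
    (1 - (n:ℝ)^α) / ((4:ℝ)^(2*k+2) * (k+1).factorial * k.factorial)
        * (n:ℝ) ^ (max (Fex α k 2) (Fex α k (k+1)))
      ≤ staticVar n ((n:ℝ)^α) (cliqueCountR n k) := by
  have hn1 : 1 ≤ n := by omega
  set p := (n:ℝ)^α with hpdef
  set cc := (4:ℝ)^(2*k+2) * (k+1).factorial * k.factorial with hcc
  have hccpos : 0 < cc := by positivity
  have h1p : 0 ≤ 1 - p := by linarith
  have hE : 1 ≤ (k+1).choose 2 := Nat.choose_pos (by omega)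
  -- choose lower bounds
  have nc1 : (n:ℝ)^(k+1) ≤ (2:ℝ)^(k+1) * (k+1).factorial * (n.choose (k+1) : ℝ) := by
    have := pow_le_choose_mul (M := n) (N := n) (c := 2) (m := k+1) (by omega)
    calc (n:ℝ)^(k+1) = ((n^(k+1) : ℕ) : ℝ) := by push_cast; ring
      _ ≤ ((2^(k+1) * (n.choose (k+1) * (k+1).factorial) : ℕ) : ℝ) := by exact_mod_cast this
      _ = (2:ℝ)^(k+1) * (k+1).factorial * (n.choose (k+1) : ℝ) := by push_cast; ring
  have nc2 : (n:ℝ)^(k-1) ≤ (4:ℝ)^(k-1) * (k-1).factorial * ((n-(k+1)).choose (k-1) : ℝ) := by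
    have := pow_le_choose_mul (M := n) (N := n-(k+1)) (c := 4) (m := k-1) (by omega)
    calc (n:ℝ)^(k-1) = ((n^(k-1) : ℕ) : ℝ) := by push_cast; ring
      _ ≤ ((4^(k-1) * ((n-(k+1)).choose (k-1) * (k-1).factorial) : ℕ) : ℝ) := by
          exact_mod_cast this
      _ = (4:ℝ)^(k-1) * (k-1).factorial * ((n-(k+1)).choose (k-1) : ℝ) := by push_cast; ring
  have hchoose1_nonneg : (0:ℝ) ≤ (n.choose (k+1) : ℝ) := by positivity
  have hchoose2_nonneg : (0:ℝ) ≤ ((n-(k+1)).choose (k-1) : ℝ) := by positivity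
  rcases max_choice (Fex α k 2) (Fex α k (k+1)) with hmax | hmax <;> rw [hmax]
  · -- two-pairs case
    have key := staticVar_cliqueCountR_ge_two (n := n) hp0 hp1 hk
    have hpe : p ^ (2*((k+1).choose 2) - 1) - p ^ (2*((k+1).choose 2))
        = p ^ (2*((k+1).choose 2) - 1) * (1 - p) := by
      have : p ^ (2*((k+1).choose 2)) = p ^ (2*((k+1).choose 2) - 1) * p := by
        rw [← pow_succ]
        congr 1
        omega
      rw [this]; ring
    rw [bridge2 hn1 hk α]
    have hnn : (n:ℝ)^(2*k) ≤ cc * ((n.choose (k+1) : ℝ) * ((n-(k+1)).choose (k-1) : ℝ)) := by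
      have hsplit : (n:ℝ)^(2*k) = (n:ℝ)^(k+1) * (n:ℝ)^(k-1) := by
        rw [← pow_add]
        congr 1
        omega
      have hconst : (2:ℝ)^(k+1) * (k+1).factorial * ((4:ℝ)^(k-1) * (k-1).factorial) ≤ cc := by
        rw [hcc]
        have g1 : (2:ℝ)^(k+1) * (4:ℝ)^(k-1) ≤ (4:ℝ)^(2*k+2) := by
          calc (2:ℝ)^(k+1) * 4^(k-1) ≤ (4:ℝ)^(k+1) * 4^(k-1) := by
                apply mul_le_mul_of_nonneg_right _ (by positivity)
                exact pow_le_pow_left₀ (by norm_num) (by norm_num) _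
            _ = (4:ℝ)^((k+1)+(k-1)) := (pow_add _ _ _).symm
            _ ≤ (4:ℝ)^(2*k+2) := pow_le_pow_right₀ (by norm_num) (by omega)
        have g2 : ((k+1).factorial : ℝ) * ((k-1).factorial : ℝ)
            ≤ ((k+1).factorial : ℝ) * (k.factorial : ℝ) := by
          apply mul_le_mul_of_nonneg_left _ (by positivity)
          exact_mod_cast Nat.factorial_le (by omega)
        calc (2:ℝ)^(k+1) * (k+1).factorial * ((4:ℝ)^(k-1) * (k-1).factorial)
            = ((2:ℝ)^(k+1) * (4:ℝ)^(k-1)) * (((k+1).factorial : ℝ) * ((k-1).factorial : ℝ)) := by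
              ring
          _ ≤ (4:ℝ)^(2*k+2) * (((k+1).factorial : ℝ) * (k.factorial : ℝ)) :=
              mul_le_mul g1 g2 (by positivity) (by positivity)
          _ = (4:ℝ)^(2*k+2) * ((k+1).factorial : ℝ) * (k.factorial : ℝ) := by ring
      calc (n:ℝ)^(2*k) = (n:ℝ)^(k+1) * (n:ℝ)^(k-1) := hsplit
        _ ≤ ((2:ℝ)^(k+1) * (k+1).factorial * (n.choose (k+1) : ℝ))
              * ((4:ℝ)^(k-1) * (k-1).factorial * ((n-(k+1)).choose (k-1) : ℝ)) :=
            mul_le_mul nc1 nc2 (by positivity) (by positivity)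
        _ = ((2:ℝ)^(k+1) * (k+1).factorial * ((4:ℝ)^(k-1) * (k-1).factorial))
              * ((n.choose (k+1) : ℝ) * ((n-(k+1)).choose (k-1) : ℝ)) := by ring
        _ ≤ cc * ((n.choose (k+1) : ℝ) * ((n-(k+1)).choose (k-1) : ℝ)) :=
            mul_le_mul_of_nonneg_right hconst (by positivity)
    calc (1 - p) / cc * ((n:ℝ)^(2*k) * p ^ (2*((k+1).choose 2) - 1))
        ≤ (1 - p) / cc * ((cc * ((n.choose (k+1) : ℝ) * ((n-(k+1)).choose (k-1) : ℝ)))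
            * p ^ (2*((k+1).choose 2) - 1)) := by
          apply mul_le_mul_of_nonneg_left _ (by positivity)
          exact mul_le_mul_of_nonneg_right hnn (by positivity)
      _ = (n.choose (k+1) : ℝ) * ((n-(k+1)).choose (k-1) : ℝ)
            * (p ^ (2*((k+1).choose 2) - 1) * (1 - p)) := by
          field_simp
      _ = (n.choose (k+1) : ℝ) * ((n-(k+1)).choose (k-1) : ℝ)
            * (p ^ (2*((k+1).choose 2) - 1) - p ^ (2*((k+1).choose 2))) := by rw [hpe]
      _ ≤ _ := key
  · -- diagonal case
    have key := staticVar_cliqueCountR_ge_diag (n := n) hp0 hp1 k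
    have hple : p ^ ((k+1).choose 2) ≤ p := by
      calc p ^ ((k+1).choose 2) ≤ p ^ 1 := pow_le_pow_of_le_one hp0 hp1 hE
        _ = p := pow_one p
    have hpe : p ^ ((k+1).choose 2) * (1 - p)
        ≤ p ^ ((k+1).choose 2) - p ^ (2*((k+1).choose 2)) := by
      have h2e : p ^ (2*((k+1).choose 2)) = p ^ ((k+1).choose 2) * p ^ ((k+1).choose 2) := by
        rw [← pow_add]; congr 1; omega
      have := mul_le_mul_of_nonneg_left hple (pow_nonneg hp0 ((k+1).choose 2))
      rw [h2e]
      nlinarith [pow_nonneg hp0 ((k+1).choose 2)]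
    rw [bridge1 hn1 α]
    have hnn : (n:ℝ)^(k+1) ≤ cc * (n.choose (k+1) : ℝ) := by
      have hconst : (2:ℝ)^(k+1) * ((k+1).factorial : ℝ) ≤ cc := by
        rw [hcc]
        have f1 : (2:ℝ)^(k+1) ≤ (4:ℝ)^(2*k+2) := by
          calc (2:ℝ)^(k+1) ≤ (4:ℝ)^(k+1) := pow_le_pow_left₀ (by norm_num) (by norm_num) _
            _ ≤ (4:ℝ)^(2*k+2) := pow_le_pow_right₀ (by norm_num) (by omega)
        have f2 : (1:ℝ) ≤ (k.factorial : ℝ) := by exact_mod_cast Nat.factorial_pos k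
        calc (2:ℝ)^(k+1) * ((k+1).factorial : ℝ)
            ≤ (4:ℝ)^(2*k+2) * ((k+1).factorial : ℝ) :=
              mul_le_mul_of_nonneg_right f1 (by positivity)
          _ ≤ (4:ℝ)^(2*k+2) * ((k+1).factorial : ℝ) * (k.factorial : ℝ) := by
              nlinarith [(show (0:ℝ) < (4:ℝ)^(2*k+2) * ((k+1).factorial : ℝ) by positivity)]
      calc (n:ℝ)^(k+1) ≤ (2:ℝ)^(k+1) * (k+1).factorial * (n.choose (k+1) : ℝ) := nc1
        _ ≤ cc * (n.choose (k+1) : ℝ) := mul_le_mul_of_nonneg_right hconst hchoose1_nonneg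
    calc (1 - p) / cc * ((n:ℝ)^(k+1) * p ^ ((k+1).choose 2))
        ≤ (1 - p) / cc * ((cc * (n.choose (k+1) : ℝ)) * p ^ ((k+1).choose 2)) := by
          apply mul_le_mul_of_nonneg_left _ (by positivity)
          exact mul_le_mul_of_nonneg_right hnn (by positivity)
      _ = (n.choose (k+1) : ℝ) * (p ^ ((k+1).choose 2) * (1 - p)) := by
          field_simp
      _ ≤ (n.choose (k+1) : ℝ) * (p ^ ((k+1).choose 2) - p ^ (2*((k+1).choose 2))) :=
          mul_le_mul_of_nonneg_left hpe hchoose1_nonneg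
      _ ≤ _ := key

end Bounds
section Assembly
open Finset

variable {n : ℕ} {p : ℝ}

lemma staticVar_smul (c : ℝ) (f : Config n → ℝ) :
    staticVar n p (fun ω => c * f ω) = c^2 * staticVar n p f := by
  rw [staticVar_eq, staticVar_eq, sCov_smul_left, sCov_comm, sCov_smul_left, sCov_comm]
  ring

lemma X_eq {k : ℕ} (hkn : k < n) :
    (fun ω : Config n => (-1:ℝ)^k * eulerChar n ω - cliqueCountR n k ω)
      = fun ω => ∑ j ∈ (Finset.range n).erase k, (-1:ℝ)^(k+j) * cliqueCountR n j ω := by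
  funext ω
  unfold eulerChar
  rw [Finset.mul_sum]
  have h1 : ∀ j, (-1:ℝ)^k * ((-1:ℝ)^j * cliqueCountR n j ω)
      = (-1:ℝ)^(k+j) * cliqueCountR n j ω := by
    intro j; rw [pow_add]; ring
  rw [Finset.sum_congr rfl (fun j _ => h1 j)]
  rw [← Finset.add_sum_erase _ _ (Finset.mem_range.mpr hkn)]
  have h2 : (-1:ℝ)^(k+k) = 1 := by
    rw [pow_add, ← mul_pow]
    norm_num
  rw [h2, one_mul]
  ring

lemma geom_tail {u : ℝ} (h0 : 0 ≤ u) (h : 2*u ≤ 1) (m : ℕ) :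
    ∑ i ∈ Finset.Icc 1 m, u ^ i ≤ 2*u := by
  have key : ∀ m : ℕ, ∑ i ∈ Finset.Icc 1 m, u ^ i ≤ 2*u - 2*u^(m+1) := by
    intro m
    induction m with
    | zero =>
        rw [Finset.Icc_eq_empty (by omega), Finset.sum_empty, pow_one]
        linarith
    | succ m ih =>
        rw [Finset.sum_Icc_succ_top (by omega)]
        have hp1 : u^(m+1+1) = u^(m+1)*u := pow_succ u (m+1)
        have hp := mul_nonneg (pow_nonneg h0 (m+1)) (by linarith : (0:ℝ) ≤ 1 - 2*u)
        nlinarith [pow_nonneg h0 (m+1)]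
  have := key m
  nlinarith [pow_nonneg h0 (m+1)]

lemma dist_sum_le {u : ℝ} (h0 : 0 ≤ u) (h : 2*u ≤ 1) (n k : ℕ) :
    ∑ j ∈ (Finset.range n).erase k, u ^ ((j-k) + (k-j)) ≤ 4 * u := by
  classical
  set s := (Finset.range n).erase k with hs
  have hsplit := Finset.sum_filter_add_sum_filter_not s (fun j => j < k)
    (fun j => u ^ ((j-k)+(k-j)))
  have hmem : ∀ j ∈ s, j ≠ k ∧ j < n := by
    intro j hj
    rw [hs, Finset.mem_erase, Finset.mem_range] at hj
    exact hj
  have h1 : ∑ j ∈ s.filter (fun j => j < k), u ^ ((j-k)+(k-j)) ≤ 2*u := by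
    have hinj : ∀ x ∈ s.filter (fun j => j < k), ∀ y ∈ s.filter (fun j => j < k),
        k - x = k - y → x = y := by
      intro x hx y hy hxy
      rw [Finset.mem_filter] at hx hy
      omega
    calc ∑ j ∈ s.filter (fun j => j < k), u ^ ((j-k)+(k-j))
        = ∑ j ∈ s.filter (fun j => j < k), u ^ (k-j) := by
          refine Finset.sum_congr rfl fun j hj => ?_
          rw [Finset.mem_filter] at hj
          congr 1
          omega
      _ = ∑ i ∈ (s.filter (fun j => j < k)).image (fun j => k - j), u ^ i :=
          (Finset.sum_image hinj).symm
      _ ≤ ∑ i ∈ Finset.Icc 1 k, u ^ i := by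
          apply Finset.sum_le_sum_of_subset_of_nonneg
          · intro i hi
            rw [Finset.mem_image] at hi
            obtain ⟨j, hj, rfl⟩ := hi
            rw [Finset.mem_filter] at hj
            have := hmem j hj.1
            rw [Finset.mem_Icc]
            omega
          · intro i _ _
            exact pow_nonneg h0 i
      _ ≤ 2*u := geom_tail h0 h k
  have h2 : ∑ j ∈ s.filter (fun j => ¬ j < k), u ^ ((j-k)+(k-j)) ≤ 2*u := by
    have hinj : ∀ x ∈ s.filter (fun j => ¬ j < k), ∀ y ∈ s.filter (fun j => ¬ j < k),
        x - k = y - k → x = y := by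
      intro x hx y hy hxy
      rw [Finset.mem_filter] at hx hy
      have := hmem x hx.1
      have := hmem y hy.1
      omega
    calc ∑ j ∈ s.filter (fun j => ¬ j < k), u ^ ((j-k)+(k-j))
        = ∑ j ∈ s.filter (fun j => ¬ j < k), u ^ (j-k) := by
          refine Finset.sum_congr rfl fun j hj => ?_
          rw [Finset.mem_filter] at hj
          congr 1
          omega
      _ = ∑ i ∈ (s.filter (fun j => ¬ j < k)).image (fun j => j - k), u ^ i :=
          (Finset.sum_image hinj).symm
      _ ≤ ∑ i ∈ Finset.Icc 1 n, u ^ i := by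
          apply Finset.sum_le_sum_of_subset_of_nonneg
          · intro i hi
            rw [Finset.mem_image] at hi
            obtain ⟨j, hj, rfl⟩ := hi
            rw [Finset.mem_filter] at hj
            have := hmem j hj.1
            rw [Finset.mem_Icc]
            omega
          · intro i _ _
            exact pow_nonneg h0 i
      _ ≤ 2*u := geom_tail h0 h n
  linarith

/-- `2^{j+1} r^{d} ≤ 2^{k+1} (2r)^{d}` where `d = |j-k|`. -/
lemma weight_le {r : ℝ} (hr : 0 ≤ r) (k j : ℕ) (hj : j ≠ k) :
    (2:ℝ)^(j+1) * r ^ ((j-k)+(k-j)) ≤ 2^(k+1) * (2*r) ^ ((j-k)+(k-j)) := by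
  rcases le_or_gt j k with hle | hgt
  · have hd : (j-k)+(k-j) = k - j := by omega
    rw [hd]
    have e1 : (2:ℝ)^(j+1) ≤ 2^(k+1) := pow_le_pow_right₀ (by norm_num) (by omega)
    have e2 : r ^ (k-j) ≤ (2*r) ^ (k-j) :=
      pow_le_pow_left₀ hr (by linarith) _
    exact mul_le_mul e1 e2 (pow_nonneg hr _) (by positivity)
  · have hd : (j-k)+(k-j) = j - k := by omega
    rw [hd]
    have e1 : (2:ℝ)^(j+1) = 2^(k+1) * 2^(j-k) := by
      rw [← pow_add]
      congr 1
      omega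
    rw [e1, mul_pow (2:ℝ) r]
    calc (2:ℝ)^(k+1) * 2^(j-k) * r^(j-k) = 2^(k+1) * (2^(j-k) * r^(j-k)) := by ring
      _ ≤ 2^(k+1) * (2^(j-k) * r^(j-k)) := le_refl _

end Assembly

/-- `Var[(-1)^k χ_n - f_{n,k}] / Var[f_{n,k}] → 0` as
`n → ∞` when `p = n^α` with `α ∈ (-1/k, -1/(k+1))`. -/
theorem variance_euler_minus_cliqueCount_ratio_tendsto_zero (k : ℕ) (hk : 1 ≤ k)
    (α : ℝ) (hα : α ∈ Set.Ioo (-(1 / (k : ℝ))) (-(1 / ((k : ℝ) + 1)))) :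
    Filter.Tendsto
      (fun n : ℕ =>
        staticVar n ((n : ℝ) ^ α)
            (fun ω => (-1 : ℝ) ^ k * eulerChar n ω - cliqueCountR n k ω) /
          staticVar n ((n : ℝ) ^ α) (cliqueCountR n k))
      Filter.atTop (nhds 0) := by

  obtain ⟨hα1, hα2⟩ := hα
  have hk0 : (0:ℝ) < k := by exact_mod_cast hk
  have hk1 : (0:ℝ) < (k:ℝ) + 1 := by linarith
  have hinv : (0:ℝ) < 1/((k:ℝ)+1) := by positivity
  have hαneg : α < 0 := lt_trans hα2 (by linarith)
  obtain ⟨δ, hδpos, hmargin⟩ := exponent_margin hk hα1 hα2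
  set cc := (4:ℝ)^(2*k+2) * ((k+1).factorial : ℝ) * (k.factorial : ℝ) with hccdef
  have hccpos : 0 < cc := by positivity
  set C := Real.sqrt (2*cc) * 2^(k+1) * 8 with hC
  have tr : Tendsto (fun n : ℕ => (n:ℝ)^(-(δ/2))) atTop (nhds 0) :=
    (tendsto_rpow_neg_atTop (by linarith)).comp tendsto_natCast_atTop_atTop
  have tp : Tendsto (fun n : ℕ => (n:ℝ)^α) atTop (nhds 0) := by
    have h := (tendsto_rpow_neg_atTop (show 0 < -α by linarith)).comp
      (tendsto_natCast_atTop_atTop (R := ℝ))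
    simpa [neg_neg, Function.comp_def] using h
  have hupper : Tendsto (fun n : ℕ => (C * (n:ℝ)^(-(δ/2)))^2) atTop (nhds 0) := by
    have h1 : Tendsto (fun n : ℕ => C * (n:ℝ)^(-(δ/2))) atTop (nhds (C * 0)) := tr.const_mul C
    rw [mul_zero] at h1
    simpa using h1.pow 2
  apply tendsto_of_tendsto_of_tendsto_of_le_of_le' tendsto_const_nhds hupper
  · -- ratio nonnegative
    filter_upwards [eventually_ge_atTop 1] with n hn
    have hp0 : 0 ≤ (n:ℝ)^α := Real.rpow_nonneg (by positivity) α
    have hp1 : (n:ℝ)^α ≤ 1 :=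
      Real.rpow_le_one_of_one_le_of_nonpos (by exact_mod_cast hn) hαneg.le
    exact div_nonneg (staticVar_nonneg hp0 hp1 _) (staticVar_nonneg hp0 hp1 _)
  · -- main estimate
    filter_upwards [eventually_ge_atTop (4*k+4),
      tp.eventually_lt_const (show (0:ℝ) < 1/2 by norm_num),
      tr.eventually_lt_const (show (0:ℝ) < 1/8 by norm_num)] with n hn4 hplt hrlt
    have hn1 : 1 ≤ n := by omega
    have hnR1 : (1:ℝ) ≤ (n:ℝ) := by exact_mod_cast hn1
    have hnpos : (0:ℝ) < (n:ℝ) := by linarith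
    set p := (n:ℝ)^α with hpdef
    have hp0 : 0 ≤ p := Real.rpow_nonneg hnpos.le α
    have hp1 : p ≤ 1 := by rw [hpdef]; linarith [hplt]
    have h1p : (1:ℝ)/2 ≤ 1 - p := by
      have : p < 1/2 := hplt
      linarith
    set r := (n:ℝ)^(-(δ/2)) with hrdef
    have hr0 : 0 ≤ r := Real.rpow_nonneg hnpos.le _
    have hr8 : r ≤ 1/8 := le_of_lt hrlt
    set D := max (Fex α k 2) (Fex α k (k+1)) with hD
    have hnD0 : (0:ℝ) < (n:ℝ)^D := Real.rpow_pos_of_pos hnpos D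
    set s := Real.sqrt ((n:ℝ)^D) with hsdef
    have hs0 : 0 ≤ s := Real.sqrt_nonneg _
    have hs2 : s^2 = (n:ℝ)^D := Real.sq_sqrt hnD0.le
    -- denominator
    have hVkLB : (1-p)/cc * (n:ℝ)^D ≤ staticVar n p (cliqueCountR n k) := varLB hk hn4 hp0 hp1
    have hYpos : 0 < (1-p)/cc * (n:ℝ)^D :=
      mul_pos (div_pos (by linarith) hccpos) hnD0
    -- per-j bounds
    have hPerJ : ∀ j ∈ (Finset.range n).erase k,
        Real.sqrt (staticVar n p (cliqueCountR n j))
          ≤ (2:ℝ)^(j+1) * r ^ ((j-k)+(k-j)) * s := by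
      intro j hj
      rw [Finset.mem_erase, Finset.mem_range] at hj
      have hjk : j ≠ k := hj.1
      have hsq : staticVar n p (cliqueCountR n j)
          ≤ ((2:ℝ)^(j+1) * r ^ ((j-k)+(k-j)) * s)^2 := by
        rcases Nat.eq_zero_or_pos j with rfl | hj1
        · have h0 : staticVar n p (cliqueCountR n 0) ≤ 0 := by
            have h := staticVar_cliqueCountR_le (n := n) hp0 hp1 0
            rwa [show Finset.Icc 2 (0+1) = (∅ : Finset ℕ) from Finset.Icc_eq_empty (by omega),
              Finset.sum_empty] at h
          exact h0.trans (sq_nonneg _)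
        · have hMj : max (Fex α j 2) (Fex α j (j+1)) ≤ D - δ * |(j:ℝ)-(k:ℝ)| :=
            max_le (hmargin j 2 hjk (le_refl 2) (by omega))
              (hmargin j (j+1) hjk (by omega) (le_refl _))
          have habs : |(j:ℝ)-(k:ℝ)| = (((j-k)+(k-j) : ℕ):ℝ) := by
            rcases le_total j k with h | h
            · have hc : (j:ℝ) ≤ (k:ℝ) := by exact_mod_cast h
              rw [abs_of_nonpos (by linarith),
                show (j-k)+(k-j) = k - j from by omega, Nat.cast_sub h]
              ring
            · have hc : (k:ℝ) ≤ (j:ℝ) := by exact_mod_cast h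
              rw [abs_of_nonneg (by linarith),
                show (j-k)+(k-j) = j - k from by omega, Nat.cast_sub h]
          have hrd : (n:ℝ) ^ (D - δ * |(j:ℝ)-(k:ℝ)|)
              = (n:ℝ)^D * (r ^ ((j-k)+(k-j)))^2 := by
            rw [habs, sub_eq_add_neg, Real.rpow_add hnpos]
            congr 1
            rw [hrdef, ← pow_mul, ← Real.rpow_natCast ((n:ℝ)^(-(δ/2))),
              ← Real.rpow_mul hnpos.le]
            congr 1
            push_cast
            ring
          have step1 := varUB hn1 hαneg j hp0 hp1
          have step2 : (n:ℝ) ^ (max (Fex α j 2) (Fex α j (j+1)))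
              ≤ (n:ℝ)^D * (r ^ ((j-k)+(k-j)))^2 := by
            rw [← hrd]
            exact Real.rpow_le_rpow_of_exponent_le hnR1 hMj
          have hj2 : ((j:ℝ)+1) ≤ (2:ℝ)^(j+1) := by
            have := Nat.lt_two_pow_self (n := j+1)
            have h2 : ((j+1 : ℕ):ℝ) ≤ ((2^(j+1) : ℕ):ℝ) := by exact_mod_cast this.le
            push_cast at h2
            linarith
          calc staticVar n p (cliqueCountR n j)
              ≤ ((j:ℝ)+1) * 2^(j+1) * (n:ℝ) ^ (max (Fex α j 2) (Fex α j (j+1))) := step1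
            _ ≤ ((j:ℝ)+1) * 2^(j+1) * ((n:ℝ)^D * (r ^ ((j-k)+(k-j)))^2) := by
                apply mul_le_mul_of_nonneg_left step2 (by positivity)
            _ ≤ (2:ℝ)^(j+1) * 2^(j+1) * ((n:ℝ)^D * (r ^ ((j-k)+(k-j)))^2) := by
                apply mul_le_mul_of_nonneg_right _ (by positivity)
                exact mul_le_mul_of_nonneg_right hj2 (by positivity)
            _ = ((2:ℝ)^(j+1) * r ^ ((j-k)+(k-j)) * s)^2 := by
                rw [mul_pow, mul_pow, hs2]
                ring
      calc Real.sqrt (staticVar n p (cliqueCountR n j))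
          ≤ Real.sqrt (((2:ℝ)^(j+1) * r ^ ((j-k)+(k-j)) * s)^2) := Real.sqrt_le_sqrt hsq
        _ = (2:ℝ)^(j+1) * r ^ ((j-k)+(k-j)) * s := Real.sqrt_sq (by positivity)
    -- sum over j
    have hkn : k < n := by omega
    have hu0 : (0:ℝ) ≤ 2*r := by linarith
    have h2u : 2*(2*r) ≤ 1 := by linarith
    have hXsqrt : Real.sqrt (staticVar n p
          (fun ω => (-1:ℝ)^k * eulerChar n ω - cliqueCountR n k ω))
        ≤ 2^(k+1) * (4*(2*r)) * s := by
      rw [X_eq hkn]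
      calc Real.sqrt (staticVar n p
            (fun ω => ∑ j ∈ (Finset.range n).erase k, (-1:ℝ)^(k+j) * cliqueCountR n j ω))
          ≤ ∑ j ∈ (Finset.range n).erase k,
              Real.sqrt (staticVar n p (fun ω => (-1:ℝ)^(k+j) * cliqueCountR n j ω)) :=
            sqrt_staticVar_sum_le hp0 hp1 _ _
        _ = ∑ j ∈ (Finset.range n).erase k,
              Real.sqrt (staticVar n p (cliqueCountR n j)) := by
            refine Finset.sum_congr rfl fun j _ => ?_
            rw [staticVar_smul, show ((-1:ℝ)^(k+j))^2 = 1 from by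
              rw [← pow_mul, mul_comm, pow_mul]; norm_num, one_mul]
        _ ≤ ∑ j ∈ (Finset.range n).erase k, (2:ℝ)^(j+1) * r ^ ((j-k)+(k-j)) * s :=
            Finset.sum_le_sum hPerJ
        _ ≤ ∑ j ∈ (Finset.range n).erase k, (2:ℝ)^(k+1) * (2*r) ^ ((j-k)+(k-j)) * s := by
            refine Finset.sum_le_sum fun j hj => ?_
            rw [Finset.mem_erase] at hj
            exact mul_le_mul_of_nonneg_right (weight_le hr0 k j hj.1) hs0
        _ = (2:ℝ)^(k+1) * (∑ j ∈ (Finset.range n).erase k, (2*r) ^ ((j-k)+(k-j))) * s := by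
            rw [← Finset.sum_mul, ← Finset.mul_sum]
        _ ≤ 2^(k+1) * (4*(2*r)) * s := by
            apply mul_le_mul_of_nonneg_right _ hs0
            exact mul_le_mul_of_nonneg_left (dist_sum_le hu0 h2u n k) (by positivity)
    -- conclude
    have hVx0 : 0 ≤ staticVar n p
        (fun ω => (-1:ℝ)^k * eulerChar n ω - cliqueCountR n k ω) :=
      staticVar_nonneg hp0 hp1 _
    have hVxle : staticVar n p
        (fun ω => (-1:ℝ)^k * eulerChar n ω - cliqueCountR n k ω)
        ≤ (2^(k+1) * (4*(2*r)) * s)^2 := by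
      have := pow_le_pow_left₀ (Real.sqrt_nonneg _) hXsqrt 2
      rwa [Real.sq_sqrt hVx0] at this
    have hdiv : staticVar n p
          (fun ω => (-1:ℝ)^k * eulerChar n ω - cliqueCountR n k ω)
          / staticVar n p (cliqueCountR n k)
        ≤ (2^(k+1) * (4*(2*r)) * s)^2 / ((1-p)/cc * (n:ℝ)^D) :=
      div_le_div₀ (sq_nonneg _) hVxle hYpos hVkLB
    refine hdiv.trans ?_
    have hC2 : C^2 = 2*cc*((2:ℝ)^(2*k+2))*64 := by
      rw [hC, mul_pow, mul_pow, Real.sq_sqrt (by positivity),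
        show ((2:ℝ)^(k+1))^2 = (2:ℝ)^(2*k+2) from by rw [← pow_mul]; congr 1; omega]
      ring
    rw [div_le_iff₀ hYpos]
    have hexp : ((2:ℝ)^(k+1) * (4*(2*r)) * s)^2 = (2:ℝ)^(2*k+2)*64*r^2*(n:ℝ)^D := by
      rw [mul_pow, mul_pow, hs2,
        show ((2:ℝ)^(k+1))^2 = (2:ℝ)^(2*k+2) from by rw [← pow_mul]; congr 1; omega]
      ring
    rw [hexp]
    have h2p : 1 ≤ 2*(1-p) := by linarith
    calc (2:ℝ)^(2*k+2)*64*r^2*(n:ℝ)^D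
        ≤ (2:ℝ)^(2*k+2)*64*r^2*(n:ℝ)^D * (2*(1-p)) :=
          le_mul_of_one_le_right (by positivity) h2p
      _ = (C * r)^2 * ((1-p)/cc*(n:ℝ)^D) := by
          rw [mul_pow, hC2]
          field_simp


end
end

section
/- Fix λ > 0, n ≥ 1, p ∈ [0,1] and h ≥ 0, and let (ω₀,ω₁,ω₂) be distributed according to the three-time dynamic Erdős–Rényi measure μ_{n,p}^{(0,h,2h)}. Let Ā = (A₁,A₂,A₃,A₄) be a quadruple of subsets of [n]. If Ā has an independent set, then E[ g(Ā) ] = 0. -/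
open Finset MeasureTheory Filter Real

noncomputable section

open scoped Classical

/-! ### Auxiliary machinery for the proof -/

section AuxProof

variable {n : ℕ}

/-- Expectation of a function of a single edge path. -/
def pE (lam p : ℝ) (t : Fin 3 → ℝ) (φ : (Fin 3 → Bool) → ℝ) : ℝ :=
  ∑ b : Fin 3 → Bool, pathWeight lam p t b * φ b

lemma sum_pi_bool_succ {m : ℕ} (f : (Fin (m + 1) → Bool) → ℝ) :
    ∑ b : Fin (m + 1) → Bool, f b =
      ∑ x : Bool, ∑ g : Fin m → Bool, f (Matrix.vecCons x g) := by
  rw [← (Fin.consEquiv (fun _ : Fin (m + 1) => Bool)).sum_comp f, Fintype.sum_prod_type]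
  rfl

lemma sum_pi_bool_zero (f : (Fin 0 → Bool) → ℝ) :
    ∑ b : Fin 0 → Bool, f b = f ![] := by
  rw [Fintype.sum_unique]
  exact congrArg f (Subsingleton.elim _ _)

lemma pathWeight_three (lam p : ℝ) (t : Fin 3 → ℝ) (b : Fin 3 → Bool) :
    pathWeight lam p t b =
      bern p (b 0) * transP lam p (t 1 - t 0) (b 0) (b 1) *
        transP lam p (t 2 - t 1) (b 1) (b 2) := by
  unfold pathWeight
  rw [Fin.prod_univ_three]
  rfl

lemma pE_ind0 (lam p : ℝ) (t : Fin 3 → ℝ) :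
    pE lam p t (fun b => if b 0 then (1 : ℝ) else 0) = p := by
  unfold pE
  simp only [sum_pi_bool_succ, sum_pi_bool_zero, Fintype.sum_bool, pathWeight_three]
  simp only [bern, transP, Matrix.cons_val_zero, Matrix.cons_val_one, Matrix.head_cons,
    Matrix.cons_val_two, Matrix.tail_cons]
  norm_num
  ring

lemma pE_ind1 (lam p : ℝ) (t : Fin 3 → ℝ) :
    pE lam p t (fun b => if b 1 then (1 : ℝ) else 0) = p := by
  unfold pE
  simp only [sum_pi_bool_succ, sum_pi_bool_zero, Fintype.sum_bool, pathWeight_three]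
  simp only [bern, transP, Matrix.cons_val_zero, Matrix.cons_val_one, Matrix.head_cons,
    Matrix.cons_val_two, Matrix.tail_cons]
  norm_num
  ring

lemma pE_ind2 (lam p : ℝ) (t : Fin 3 → ℝ) :
    pE lam p t (fun b => if b 2 then (1 : ℝ) else 0) = p := by
  unfold pE
  simp only [sum_pi_bool_succ, sum_pi_bool_zero, Fintype.sum_bool, pathWeight_three]
  simp only [bern, transP, Matrix.cons_val_zero, Matrix.cons_val_one, Matrix.head_cons,
    Matrix.cons_val_two, Matrix.tail_cons]
  norm_num
  ring

/-- Stationarity of the single–edge chain: the marginal of the indicator at any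
of the three times is `p`. -/
lemma pE_ind (lam p : ℝ) (t : Fin 3 → ℝ) (i : Fin 3) :
    pE lam p t (fun b => if b i then (1 : ℝ) else 0) = p := by
  fin_cases i
  · exact pE_ind0 lam p t
  · exact pE_ind1 lam p t
  · exact pE_ind2 lam p t

/-- Full factorization of the dynamic expectation of a per-edge product. -/
lemma dynExp_prod_edges (lam p : ℝ) (t : Fin 3 → ℝ)
    (φ : Edge n → (Fin 3 → Bool) → ℝ) :
    dynExp lam p n t (fun ω => ∏ e : Edge n, φ e (fun i => ω i e)) =
      ∏ e : Edge n, pE lam p t (φ e) := by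
  unfold dynExp dynWeight pE
  rw [Finset.prod_univ_sum]
  rw [Fintype.piFinset_univ]
  rw [← (Equiv.piComm (fun (_ : Fin 3) (_ : Edge n) => Bool)).sum_comp
    (fun η : Edge n → Fin 3 → Bool =>
      ∏ e : Edge n, pathWeight lam p t (η e) * φ e (η e))]
  exact Finset.sum_congr rfl fun ω _ => by rw [← Finset.prod_mul_distrib]; rfl

lemma cliqueInd_eq_prod (A : Finset (Fin n)) (ω : Config n) :
    cliqueInd A ω =
      ∏ e : Edge n, (if e.1 ∈ A.sym2 then (if ω e then (1 : ℝ) else 0) else 1) := by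
  unfold cliqueInd
  by_cases hc : IsCliqueOf A ω
  · rw [if_pos hc]
    symm
    apply Finset.prod_eq_one
    intro e _
    by_cases h1 : e.1 ∈ A.sym2
    · rw [if_pos h1, hc e h1]; simp
    · rw [if_neg h1]
  · rw [if_neg hc]
    symm
    unfold IsCliqueOf at hc
    push_neg at hc
    obtain ⟨e, hm, hne⟩ := hc
    apply Finset.prod_eq_zero (Finset.mem_univ e)
    rw [if_pos hm]
    simp [hne]

lemma edge_notMem_sym2 (Aq Ar : Finset (Fin n)) (hcard : (Aq ∩ Ar).card ≤ 1) :
    ∀ e : Sym2 (Fin n), ¬e.IsDiag → e ∈ Aq.sym2 → e ∉ Ar.sym2 := by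
  intro e
  induction e using Sym2.inductionOn with
  | hf u v =>
    intro hd he hmem
    rw [Finset.mk_mem_sym2_iff] at he hmem
    have huv : u ≠ v := by simpa [Sym2.mk_isDiag_iff] using hd
    have hsub : ({u, v} : Finset (Fin n)) ⊆ Aq ∩ Ar := by
      intro x hx
      rcases Finset.mem_insert.1 hx with rfl | hx
      · exact Finset.mem_inter.2 ⟨he.1, hmem.1⟩
      · rw [Finset.mem_singleton] at hx
        subst hx
        exact Finset.mem_inter.2 ⟨he.2, hmem.2⟩
    have h2 : 2 ≤ (Aq ∩ Ar).card := by
      calc 2 = ({u, v} : Finset (Fin n)).card := (Finset.card_pair huv).symm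
      _ ≤ _ := Finset.card_le_card hsub
    omega

/-- The per-edge factor of `Phi`. -/
def phiA (A : Fin 4 → Finset (Fin n)) (τ : Fin 4 → Fin 3) (e : Edge n)
    (b : Fin 3 → Bool) : ℝ :=
  ∏ q : Fin 4, (if e.1 ∈ (A q).sym2 then (if b (τ q) then (1 : ℝ) else 0) else 1)

/-- Product of clique indicators evaluated at a choice of times. -/
def Phi (A : Fin 4 → Finset (Fin n)) (τ : Fin 4 → Fin 3) (ω : Fin 3 → Config n) : ℝ :=
  ∏ q : Fin 4, cliqueInd (A q) (ω (τ q))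

lemma Phi_eq_prod (A : Fin 4 → Finset (Fin n)) (τ : Fin 4 → Fin 3) :
    Phi A τ = fun ω => ∏ e : Edge n, phiA A τ e (fun i => ω i e) := by
  funext ω
  unfold Phi phiA
  simp_rw [cliqueInd_eq_prod]
  rw [Finset.prod_comm]

lemma dynExp_Phi_update (lam p : ℝ) (t : Fin 3 → ℝ)
    (A : Fin 4 → Finset (Fin n)) (q : Fin 4)
    (hq : ∀ r : Fin 4, r ≠ q → ((A q) ∩ (A r)).card ≤ 1)
    (τ : Fin 4 → Fin 3) (i j : Fin 3) :
    dynExp lam p n t (Phi A (Function.update τ q i)) =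
      dynExp lam p n t (Phi A (Function.update τ q j)) := by
  rw [Phi_eq_prod, Phi_eq_prod, dynExp_prod_edges, dynExp_prod_edges]
  apply Finset.prod_congr rfl
  intro e _
  by_cases he : e.1 ∈ (A q).sym2
  · have hother : ∀ r : Fin 4, r ≠ q → e.1 ∉ (A r).sym2 :=
      fun r hr => edge_notMem_sym2 (A q) (A r) (hq r hr) e.1 e.2 he
    have hform : ∀ k : Fin 3,
        phiA A (Function.update τ q k) e = fun b => if b k then (1 : ℝ) else 0 := by
      intro k
      funext b
      unfold phiA
      rw [Finset.prod_eq_single q]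
      · rw [if_pos he, Function.update_self]
      · intro r _ hr
        rw [if_neg (hother r hr)]
      · intro hmem
        exact absurd (Finset.mem_univ q) hmem
    rw [hform i, hform j]
    show pE lam p t _ = pE lam p t _
    rw [pE_ind, pE_ind]
  · have : phiA A (Function.update τ q i) e = phiA A (Function.update τ q j) e := by
      funext b
      unfold phiA
      apply Finset.prod_congr rfl
      intro r _
      by_cases hr : r = q
      · subst hr
        rw [if_neg he, if_neg he]
      · rw [Function.update_of_ne hr, Function.update_of_ne hr]
    rw [this]

lemma dynExp_sum (lam p : ℝ) (t : Fin 3 → ℝ) {ι : Type*} (s : Finset ι)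
    (F : ι → (Fin 3 → Config n) → ℝ) :
    dynExp lam p n t (fun ω => ∑ x ∈ s, F x ω) =
      ∑ x ∈ s, dynExp lam p n t (F x) := by
  unfold dynExp
  simp_rw [Finset.mul_sum]
  exact Finset.sum_comm

lemma dynExp_const_mul (lam p : ℝ) (t : Fin 3 → ℝ) (c : ℝ)
    (F : (Fin 3 → Config n) → ℝ) :
    dynExp lam p n t (fun ω => c * F ω) = c * dynExp lam p n t F := by
  unfold dynExp
  rw [Finset.mul_sum]
  exact Finset.sum_congr rfl fun _ _ => by ring

/-- The sign of an expansion term. -/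
def sgn (ε : Fin 4 → Bool) : ℝ := ∏ r : Fin 4, (if ε r then (1 : ℝ) else -1)

/-- The time assignment of an expansion term. -/
def tauf (ε : Fin 4 → Bool) : Fin 4 → Fin 3 :=
  fun r => if ε r then (![2, 2, 1, 1] : Fin 4 → Fin 3) r
           else (![1, 1, 0, 0] : Fin 4 → Fin 3) r

lemma gQuad_expand (A : Fin 4 → Finset (Fin n)) :
    gQuad A = fun ω => ∑ ε : Fin 4 → Bool, sgn ε * Phi A (tauf ε) ω := by
  funext ω
  simp only [sum_pi_bool_succ, sum_pi_bool_zero, Fintype.sum_bool, sgn, tauf, Phi,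
    Fin.prod_univ_four]
  simp only [Matrix.cons_val_zero, Matrix.cons_val_one, Matrix.head_cons,
    Matrix.cons_val_two, Matrix.cons_val_three, Matrix.tail_cons]
  norm_num [gQuad]
  ring

lemma tauf_update (ε : Fin 4 → Bool) (q : Fin 4) (b : Bool) :
    tauf (Function.update ε q b) =
      Function.update (tauf ε) q (tauf (Function.update ε q b) q) := by
  funext r
  by_cases hr : r = q
  · subst hr; rw [Function.update_self]
  · rw [Function.update_of_ne hr]
    unfold tauf
    rw [Function.update_of_ne hr]

lemma sgn_update_not (ε : Fin 4 → Bool) (q : Fin 4) :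
    sgn (Function.update ε q (!ε q)) = -sgn ε := by
  unfold sgn
  rw [← Finset.mul_prod_erase _ _ (Finset.mem_univ q),
    ← Finset.mul_prod_erase _ (fun r => if ε r then (1 : ℝ) else -1) (Finset.mem_univ q)]
  have hrest : ∏ r ∈ Finset.univ.erase q, (if Function.update ε q (!ε q) r then (1 : ℝ) else -1)
      = ∏ r ∈ Finset.univ.erase q, (if ε r then (1 : ℝ) else -1) := by
    apply Finset.prod_congr rfl
    intro r hr
    rw [Function.update_of_ne (Finset.ne_of_mem_erase hr)]
  rw [hrest, Function.update_self]
  cases hεq : ε q <;> simp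

end AuxProof

/-- If the quadruple `Ā` has an independent set, then
`E[g(Ā)] = 0` under the three-time dynamic Erdős–Rényi measure. -/
theorem expectation_gQuad_eq_zero_of_indep (lam : ℝ) (hlam : 0 < lam)
    (n : ℕ) (hn : 1 ≤ n) (p : ℝ) (hp : p ∈ Set.Icc (0 : ℝ) 1)
    (h : ℝ) (hh : 0 ≤ h) (A : Fin 4 → Finset (Fin n)) (hA : HasIndepSet A) :
    dynExp lam p n ![0, h, 2 * h] (gQuad A) = 0 := by
  obtain ⟨q, hq⟩ := hA
  rw [gQuad_expand, dynExp_sum]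
  simp_rw [dynExp_const_mul]
  apply Finset.sum_ninvolution (g := fun ε => Function.update ε q (!ε q))
  · intro ε
    have hD : dynExp lam p n ![0, h, 2 * h] (Phi A (tauf (Function.update ε q (!ε q)))) =
        dynExp lam p n ![0, h, 2 * h] (Phi A (tauf ε)) := by
      rw [tauf_update]
      conv_rhs => rw [show tauf ε = Function.update (tauf ε) q (tauf ε q) from
        (Function.update_eq_self q (tauf ε)).symm]
      exact dynExp_Phi_update lam p ![0, h, 2 * h] A q hq (tauf ε) _ _
    rw [hD, sgn_update_not]
    ring
  · intro ε _
    intro hcon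
    have := congrFun hcon q
    rw [Function.update_self] at this
    exact (Bool.not_ne_self (ε q)) this
  · intro ε
    exact Finset.mem_univ _
  · intro ε
    funext r
    by_cases hr : r = q
    · subst hr
      simp [Function.update_self, Function.update_idem]
    · simp [Function.update_of_ne hr]


end
end
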